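/- arXiv:1607.05459 — 13 statements merged into one kernel-verified Lean document; each statement's English description precedes it below -/
import Mathlib

section
/- Let f : ℝ₊ᵏ → ℝ₊₊ᵏ be a standard interference function. Then f has at most one fixed point in ℝ₊₊ᵏ, i.e., there is at most one x ∈ ℝ₊₊ᵏ with x = f(x). -/
lemma sif_aux (k : ℕ) (f : (Fin k → ℝ) → (Fin k → ℝ))
    (hmono : ∀ x y : Fin k → ℝ, (∀ i, 0 ≤ x i) → x ≤ y → f x ≤ f y)
    (hscale : ∀ α : ℝ, 1 < α → ∀ x : Fin k → ℝ, (∀ i, 0 ≤ x i) →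
      ∀ i, f (α • x) i < α * f x i)
    (x y : Fin k → ℝ) (hx : ∀ i, 0 < x i) (hy : ∀ i, 0 < y i)
    (hfx : x = f x) (hfy : y = f y) (j : Fin k) (hj : x j < y j) : False := by
  have : Nonempty (Fin k) := ⟨j⟩
  obtain ⟨i0, hi0⟩ := Finite.exists_max (fun i => y i / x i)
  set α := y i0 / x i0 with hα
  have hα1 : 1 < α := lt_of_lt_of_le (by rw [lt_div_iff₀ (hx j)]; simpa using hj) (hi0 j)
  have hle : y ≤ α • x := by
    intro i
    have := hi0 i
    simpa [Pi.smul_apply, smul_eq_mul] using (div_le_iff₀ (hx i)).mp this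
  have heq : α * x i0 = y i0 := by
    rw [hα, div_mul_eq_mul_div, mul_div_assoc, div_self (hx i0).ne', mul_one]
  have hxnn : ∀ i, 0 ≤ x i := fun i => (hx i).le
  have hynn : ∀ i, 0 ≤ y i := fun i => (hy i).le
  have h1 : f y i0 ≤ f (α • x) i0 := hmono y (α • x) hynn hle i0
  have h2 : f (α • x) i0 < α * f x i0 := hscale α hα1 x hxnn i0
  have : y i0 < y i0 := by
    calc y i0 = f y i0 := congrFun hfy i0
    _ ≤ f (α • x) i0 := h1
    _ < α * f x i0 := h2
    _ = α * x i0 := by rw [← congrFun hfx i0]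
    _ = y i0 := heq
  exact lt_irrefl _ this

/-- A standard interference function has at most one fixed point in
the positive orthant. -/
theorem sif_fixed_point_unique (k : ℕ) (f : (Fin k → ℝ) → (Fin k → ℝ))
    (hpos : ∀ x : Fin k → ℝ, (∀ i, 0 ≤ x i) → ∀ i, 0 < f x i)
    (hmono : ∀ x y : Fin k → ℝ, (∀ i, 0 ≤ x i) → x ≤ y → f x ≤ f y)
    (hscale : ∀ α : ℝ, 1 < α → ∀ x : Fin k → ℝ, (∀ i, 0 ≤ x i) →
      ∀ i, f (α • x) i < α * f x i) :
    ∀ x y : Fin k → ℝ, (∀ i, 0 < x i) → (∀ i, 0 < y i) →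
      x = f x → y = f y → x = y := by
  intro x y hx hy hfx hfy
  funext i
  by_contra h
  rcases lt_or_gt_of_ne h with h | h
  · exact sif_aux k f hmono hscale x y hx hy hfx hfy i h
  · exact sif_aux k f hmono hscale y x hy hx hfy hfx i h
end

section
/- Let f : ℝ₊ᵏ → ℝ₊₊ᵏ be a standard interference function. Then f has a fixed point (some x ∈ ℝ₊₊ᵏ with x = f(x)) if and only if there exists x' ∈ ℝ₊₊ᵏ satisfying f(x') ≤ x' componentwise. -/
/-- A standard interference function has a fixed point in the positive
orthant if and only if there exists a positive `x'` with `f x' ≤ x'` componentwise. -/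
theorem sif_fixed_point_exists_iff (k : ℕ) (f : (Fin k → ℝ) → (Fin k → ℝ))
    (hpos : ∀ x : Fin k → ℝ, (∀ i, 0 ≤ x i) → ∀ i, 0 < f x i)
    (hmono : ∀ x y : Fin k → ℝ, (∀ i, 0 ≤ x i) → x ≤ y → f x ≤ f y)
    (hscale : ∀ α : ℝ, 1 < α → ∀ x : Fin k → ℝ, (∀ i, 0 ≤ x i) →
      ∀ i, f (α • x) i < α * f x i) :
    (∃ x : Fin k → ℝ, (∀ i, 0 < x i) ∧ x = f x) ↔
      (∃ x' : Fin k → ℝ, (∀ i, 0 < x' i) ∧ f x' ≤ x') := by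
  constructor
  · rintro ⟨x, hx, hfx⟩
    exact ⟨x, hx, le_of_eq hfx.symm⟩
  · rintro ⟨x', hx', hfx'⟩
    set S : Set (Fin k → ℝ) := {y | (∀ i, 0 ≤ y i) ∧ y ≤ x' ∧ f y ≤ y} with hS
    have hx'S : x' ∈ S := ⟨fun i => (hx' i).le, le_refl _, hfx'⟩
    set x : Fin k → ℝ := fun i => sInf ((fun y => y i) '' S) with hxdef
    have hbdd : ∀ i, BddBelow ((fun y => y i) '' S) := by
      intro i
      refine ⟨0, ?_⟩
      rintro a ⟨z, hz, rfl⟩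
      exact hz.1 i
    have hne : ∀ i, ((fun y => y i) '' S).Nonempty := fun i => ⟨x' i, x', hx'S, rfl⟩
    have hlb : ∀ y ∈ S, x ≤ y := by
      intro y hy i
      exact csInf_le (hbdd i) ⟨y, hy, rfl⟩
    have hx0 : ∀ i, 0 ≤ x i := by
      intro i
      apply le_csInf (hne i)
      rintro a ⟨z, hz, rfl⟩
      exact hz.1 i
    have hfxx : f x ≤ x := by
      intro i
      apply le_csInf (hne i)
      rintro a ⟨z, hz, rfl⟩
      exact le_trans (hmono x z hx0 (hlb z hz) i) (hz.2.2 i)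
    have hfS : f x ∈ S := ⟨fun i => (hpos x hx0 i).le,
      le_trans hfxx (hlb x' hx'S), hmono (f x) x (fun i => (hpos x hx0 i).le) hfxx⟩
    have heq : x = f x := le_antisymm (hlb _ hfS) hfxx
    refine ⟨x, fun i => ?_, heq⟩
    rw [heq]
    exact hpos x hx0 i
end

section
/- Let f : ℝ₊ᵏ → ℝ₊₊ᵏ be a standard interference function that possesses a fixed point x* = f(x*). Then for every initial point x⁽¹⁾ ∈ ℝ₊ᵏ, the sequence defined by x⁽ⁿ⁺¹⁾ = f(x⁽ⁿ⁾) converges to x*. -/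
open Filter

private lemma sif_helper_le {a c : ℝ} (hc : 0 < c)
    (h : ∀ α : ℝ, 1 < α → a ≤ α * c) : a ≤ c := by
  by_contra h'
  push_neg at h'
  have h1 : (1 : ℝ) < (a + c) / (2 * c) := by
    rw [lt_div_iff₀ (by linarith)]; linarith
  have h2 := h _ h1
  have h3 : (a + c) / (2 * c) * c = (a + c) / 2 := by
    field_simp
  rw [h3] at h2
  linarith

/-- If a standard interference function possesses a fixed point `x*`
(in the positive orthant), then from every initial point `x⁽¹⁾ ∈ ℝ₊ᵏ` the iteration
`x⁽ⁿ⁺¹⁾ = f(x⁽ⁿ⁾)` converges to `x*`. -/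
theorem sif_iteration_converges (k : ℕ) (f : (Fin k → ℝ) → (Fin k → ℝ))
    (hpos : ∀ x : Fin k → ℝ, (∀ i, 0 ≤ x i) → ∀ i, 0 < f x i)
    (hmono : ∀ x y : Fin k → ℝ, (∀ i, 0 ≤ x i) → x ≤ y → f x ≤ f y)
    (hscale : ∀ α : ℝ, 1 < α → ∀ x : Fin k → ℝ, (∀ i, 0 ≤ x i) →
      ∀ i, f (α • x) i < α * f x i)
    (xstar : Fin k → ℝ) (hxstar_pos : ∀ i, 0 < xstar i) (hfix : xstar = f xstar) :
    ∀ x1 : Fin k → ℝ, (∀ i, 0 ≤ x1 i) →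
      Filter.Tendsto (fun n => f^[n] x1) Filter.atTop (nhds xstar) := by
  intro x1 hx1
  have hfix' : f xstar = xstar := hfix.symm
  have hxs0 : ∀ i, 0 ≤ xstar i := fun i => (hxstar_pos i).le
  rcases Nat.eq_zero_or_pos k with hk | hk
  · subst hk
    have h0 : ∀ n, f^[n] x1 = xstar := fun n => funext fun i => i.elim0
    simpa [h0] using (tendsto_const_nhds : Tendsto (fun _ : ℕ => xstar) atTop (nhds xstar))
  -- basic facts
  have hnn : ∀ x : Fin k → ℝ, (∀ i, 0 ≤ x i) → ∀ i, 0 ≤ f x i :=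
    fun x hx i => (hpos x hx i).le
  have iter_nonneg : ∀ n, ∀ x : Fin k → ℝ, (∀ i, 0 ≤ x i) → ∀ i, 0 ≤ f^[n] x i := by
    intro n
    induction n with
    | zero => intro x hx i; simpa using hx i
    | succ n ih =>
      intro x hx i
      rw [Function.iterate_succ_apply]
      exact ih (f x) (hnn x hx) i
  have iter_mono : ∀ n, ∀ x y : Fin k → ℝ, (∀ i, 0 ≤ x i) → x ≤ y →
      f^[n] x ≤ f^[n] y := by
    intro n
    induction n with
    | zero => intro x y _ hxy; simpa using hxy
    | succ n ih =>
      intro x y hx hxy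
      rw [Function.iterate_succ_apply, Function.iterate_succ_apply]
      exact ih (f x) (f y) (hnn x hx) (hmono x y hx hxy)
  have iter_fixed : ∀ n, f^[n] xstar = xstar := fun n => Function.iterate_fixed hfix' n
  -- choose α₀ > 1 with x1 ≤ α₀ • xstar
  set s : ℝ := ∑ i, x1 i / xstar i with hs
  have hs0 : 0 ≤ s := Finset.sum_nonneg fun i _ => div_nonneg (hx1 i) (hxs0 i)
  set α₀ : ℝ := 2 + s with hα₀def
  have hα₀ : 1 < α₀ := by simp only [hα₀def]; linarith
  set z : Fin k → ℝ := α₀ • xstar with hzdef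
  have hz_app : ∀ i, z i = α₀ * xstar i := fun i => rfl
  have hz_nonneg : ∀ i, 0 ≤ z i := fun i => by
    rw [hz_app]; nlinarith [hxstar_pos i, hα₀]
  have hx1le : x1 ≤ z := by
    intro i
    have h1 : x1 i / xstar i ≤ s :=
      Finset.single_le_sum (fun j _ => div_nonneg (hx1 j) (hxs0 j)) (Finset.mem_univ i)
    have h2 : x1 i / xstar i ≤ α₀ := by simp only [hα₀def]; linarith
    rw [hz_app]
    exact (div_le_iff₀ (hxstar_pos i)).mp h2
  have hz_ge : xstar ≤ z := by
    intro i
    rw [hz_app]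
    nlinarith [hxstar_pos i]
  have hfz : f z ≤ z := by
    intro i
    have := hscale α₀ hα₀ xstar hxs0 i
    rw [hfix'] at this
    rw [hz_app]
    exact le_of_lt (by simpa using this)
  -- upper sequence u and lower sequence v
  set u : ℕ → Fin k → ℝ := fun n => f^[n] z with hudef
  set v : ℕ → Fin k → ℝ := fun n => f^[n] (0 : Fin k → ℝ) with hvdef
  have hu_nonneg : ∀ n i, 0 ≤ u n i := fun n i => iter_nonneg n z hz_nonneg i
  have hv_nonneg : ∀ n i, 0 ≤ v n i := fun n i => iter_nonneg n 0 (fun _ => le_refl 0) i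
  have hu_succ : ∀ n, u (n + 1) ≤ u n := by
    intro n
    show f^[n+1] z ≤ f^[n] z
    rw [Function.iterate_succ_apply]
    exact iter_mono n (f z) z (hnn z hz_nonneg) hfz
  have hu_anti : ∀ i, Antitone fun n => u n i := fun i =>
    antitone_nat_of_succ_le fun n => hu_succ n i
  have hu_lb : ∀ n, xstar ≤ u n := fun n => by
    have := iter_mono n xstar z hxs0 hz_ge
    rwa [iter_fixed n] at this
  have hv_succ : ∀ n, v n ≤ v (n + 1) := by
    intro n
    show f^[n] (0 : Fin k → ℝ) ≤ f^[n+1] (0 : Fin k → ℝ)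
    rw [Function.iterate_succ_apply]
    exact iter_mono n 0 (f 0) (fun _ => le_refl 0) (fun i => (hpos 0 (fun _ => le_refl 0) i).le)
  have hv_mono : ∀ i, Monotone fun n => v n i := fun i =>
    monotone_nat_of_le_succ fun n => hv_succ n i
  have hv_ub : ∀ n, v n ≤ xstar := fun n => by
    have := iter_mono n 0 xstar (fun _ => le_refl 0) (fun i => hxs0 i)
    rwa [iter_fixed n] at this
  -- limits
  set yU : Fin k → ℝ := fun i => ⨅ n, u n i with hyUdef
  set yL : Fin k → ℝ := fun i => ⨆ n, v n i with hyLdef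
  have hu_bdd : ∀ i, BddBelow (Set.range fun n => u n i) := fun i =>
    ⟨xstar i, by rintro r ⟨n, rfl⟩; exact hu_lb n i⟩
  have hv_bdd : ∀ i, BddAbove (Set.range fun n => v n i) := fun i =>
    ⟨xstar i, by rintro r ⟨n, rfl⟩; exact hv_ub n i⟩
  have hu_tend : ∀ i, Tendsto (fun n => u n i) atTop (nhds (yU i)) := fun i =>
    tendsto_atTop_ciInf (hu_anti i) (hu_bdd i)
  have hv_tend : ∀ i, Tendsto (fun n => v n i) atTop (nhds (yL i)) := fun i =>
    tendsto_atTop_ciSup (hv_mono i) (hv_bdd i)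
  have hyU_ge : ∀ i, xstar i ≤ yU i := fun i => le_ciInf fun n => hu_lb n i
  have hyU_pos : ∀ i, 0 < yU i := fun i => lt_of_lt_of_le (hxstar_pos i) (hyU_ge i)
  have hyU_nonneg : ∀ i, 0 ≤ yU i := fun i => (hyU_pos i).le
  have hyU_le_u : ∀ n, yU ≤ u n := fun n i => ciInf_le (hu_bdd i) n
  have hyL_le : ∀ i, yL i ≤ xstar i := fun i => ciSup_le fun n => hv_ub n i
  have hv_le_yL : ∀ n, v n ≤ yL := fun n i => le_ciSup (hv_bdd i) n
  have hyL_pos : ∀ i, 0 < yL i := fun i => by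
    have h1 : v 1 i ≤ yL i := hv_le_yL 1 i
    have h2 : 0 < v 1 i := by
      show 0 < f^[1] (0 : Fin k → ℝ) i
      simpa using hpos 0 (fun _ => le_refl 0) i
    linarith
  have hyL_nonneg : ∀ i, 0 ≤ yL i := fun i => (hyL_pos i).le
  -- yU is a fixed point
  have hfyU_le : ∀ i, f yU i ≤ yU i := by
    intro i
    apply le_ciInf
    intro n
    have h1 : f yU ≤ f (u n) := hmono yU (u n) hyU_nonneg (hyU_le_u n)
    have h2 : f (u n) = u (n + 1) := (Function.iterate_succ_apply' f n z).symm
    calc f yU i ≤ f (u n) i := h1 i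
      _ = u (n + 1) i := by rw [h2]
      _ ≤ u n i := hu_succ n i
  have hyU_le_f : ∀ i, yU i ≤ f yU i := by
    intro i
    apply sif_helper_le (hpos yU hyU_nonneg i)
    intro α hα
    obtain ⟨N, hN⟩ : ∃ N, ∀ j, u N j < α * yU j := by
      have hev : ∀ᶠ n in atTop, ∀ j, u n j < α * yU j :=
        eventually_all.2 fun j =>
          (hu_tend j).eventually_lt_const (by nlinarith [hyU_pos j])
      exact hev.exists
    have huN_le : u N ≤ α • yU := fun j => (hN j).le
    have h1 : f (u N) ≤ f (α • yU) := hmono (u N) (α • yU) (hu_nonneg N) huN_le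
    have h2 : f (u N) = u (N + 1) := (Function.iterate_succ_apply' f N z).symm
    calc yU i ≤ u (N + 1) i := hyU_le_u (N + 1) i
      _ = f (u N) i := by rw [h2]
      _ ≤ f (α • yU) i := h1 i
      _ ≤ α * f yU i := (hscale α hα yU hyU_nonneg i).le
  have hfyU : f yU = yU := funext fun i => le_antisymm (hfyU_le i) (hyU_le_f i)
  -- yL is a fixed point
  have hyL_le_f : ∀ i, yL i ≤ f yL i := by
    intro i
    apply ciSup_le
    intro n
    have h1 : f (v n) ≤ f yL := hmono (v n) yL (hv_nonneg n) (hv_le_yL n)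
    have h2 : f (v n) = v (n + 1) := (Function.iterate_succ_apply' f n 0).symm
    calc v n i ≤ v (n + 1) i := hv_succ n i
      _ = f (v n) i := by rw [h2]
      _ ≤ f yL i := h1 i
  have hfyL_le : ∀ i, f yL i ≤ yL i := by
    intro i
    apply sif_helper_le (hyL_pos i)
    intro α hα
    obtain ⟨N, hN⟩ : ∃ N, ∀ j, yL j < α * v N j := by
      have hev : ∀ᶠ n in atTop, ∀ j, yL j < α * v n j := by
        apply eventually_all.2
        intro j
        have h1 : Tendsto (fun n => α * v n j) atTop (nhds (α * yL j)) :=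
          (hv_tend j).const_mul α
        exact h1.eventually_const_lt (by nlinarith [hyL_pos j])
      exact hev.exists
    have hle : yL ≤ α • v N := fun j => (hN j).le
    have h1 : f yL ≤ f (α • v N) := hmono yL (α • v N) hyL_nonneg hle
    have h2 : f (v N) = v (N + 1) := (Function.iterate_succ_apply' f N 0).symm
    calc f yL i ≤ f (α • v N) i := h1 i
      _ ≤ α * f (v N) i := (hscale α hα (v N) (hv_nonneg N) i).le
      _ = α * v (N + 1) i := by rw [h2]
      _ ≤ α * yL i := by
          have := hv_le_yL (N + 1) i
          nlinarith
  have hfyL : f yL = yL := funext fun i => le_antisymm (hfyL_le i) (hyL_le_f i)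
  -- uniqueness of positive fixed points
  have fix_le : ∀ a b : Fin k → ℝ, (∀ i, 0 < a i) → (∀ i, 0 < b i) →
      f a = a → f b = b → a ≤ b := by
    intro a b ha hb hfa hfb
    have hne : (Finset.univ : Finset (Fin k)).Nonempty := ⟨⟨0, hk⟩, Finset.mem_univ _⟩
    obtain ⟨j, _, hj⟩ := Finset.exists_mem_eq_sup' hne fun i => a i / b i
    set β : ℝ := Finset.univ.sup' hne fun i => a i / b i with hβdef
    have hβ_ge : ∀ i, a i / b i ≤ β := by
      intro i; exact Finset.le_sup' (fun i => a i / b i) (Finset.mem_univ i)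
    have ha_le : ∀ i, a i ≤ β * b i := fun i => (div_le_iff₀ (hb i)).mp (hβ_ge i)
    have haj : a j = β * b j := by
      rw [hj, div_mul_cancel₀ _ (hb j).ne']
    by_cases hβ1 : β ≤ 1
    · intro i
      calc a i ≤ β * b i := ha_le i
        _ ≤ 1 * b i := by nlinarith [hb i]
        _ = b i := one_mul _
    · exfalso
      push_neg at hβ1
      have hab : a ≤ β • b := fun i => ha_le i
      have h1 : f a ≤ f (β • b) := hmono a (β • b) (fun i => (ha i).le) hab
      have h2 : f (β • b) j < β * f b j := hscale β hβ1 b (fun i => (hb i).le) j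
      rw [hfb] at h2
      have h3 : a j < β * b j := by
        calc a j = f a j := by rw [hfa]
          _ ≤ f (β • b) j := h1 j
          _ < β * b j := h2
      linarith [haj ▸ h3]
  have hyU_eq : yU = xstar :=
    le_antisymm (fix_le yU xstar hyU_pos hxstar_pos hfyU hfix')
      (fix_le xstar yU hxstar_pos hyU_pos hfix' hfyU)
  have hyL_eq : yL = xstar :=
    le_antisymm (fix_le yL xstar hyL_pos hxstar_pos hfyL hfix')
      (fix_le xstar yL hxstar_pos hyL_pos hfix' hfyL)
  -- squeeze
  rw [tendsto_pi_nhds]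
  intro i
  have hlow : ∀ n, v n i ≤ f^[n] x1 i := fun n =>
    iter_mono n 0 x1 (fun _ => le_refl 0) (fun j => hx1 j) i
  have hhigh : ∀ n, f^[n] x1 i ≤ u n i := fun n => iter_mono n x1 z hx1 hx1le i
  have hvT : Tendsto (fun n => v n i) atTop (nhds (xstar i)) := by
    have := hv_tend i; rwa [hyL_eq] at this
  have huT : Tendsto (fun n => u n i) atTop (nhds (xstar i)) := by
    have := hu_tend i; rwa [hyU_eq] at this
  exact tendsto_of_tendsto_of_tendsto_of_le_of_le hvT huT hlow hhigh
end

section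
/- Let f : ℝ₊ᵏ → ℝ₊₊ᵏ be a standard interference function and consider the sequence x⁽ⁿ⁺¹⁾ = f(x⁽ⁿ⁾). If x⁽¹⁾ = 0, the sequence is monotonically increasing in each component; if instead x⁽¹⁾ satisfies f(x⁽¹⁾) ≤ x⁽¹⁾ componentwise, the sequence is monotonically decreasing in each component. -/
/-- For a standard interference function the iteration
`x⁽ⁿ⁺¹⁾ = f(x⁽ⁿ⁾)` is componentwise monotonically increasing when started at `0`,
and componentwise monotonically decreasing when started at a point `x⁽¹⁾` with
`f(x⁽¹⁾) ≤ x⁽¹⁾`. -/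
theorem sif_iteration_monotone (k : ℕ) (f : (Fin k → ℝ) → (Fin k → ℝ))
    (hpos : ∀ x : Fin k → ℝ, (∀ i, 0 ≤ x i) → ∀ i, 0 < f x i)
    (hmono : ∀ x y : Fin k → ℝ, (∀ i, 0 ≤ x i) → x ≤ y → f x ≤ f y)
    (hscale : ∀ α : ℝ, 1 < α → ∀ x : Fin k → ℝ, (∀ i, 0 ≤ x i) →
      ∀ i, f (α • x) i < α * f x i) :
    ∀ x1 : Fin k → ℝ, (∀ i, 0 ≤ x1 i) →
      ((x1 = 0 → ∀ n : ℕ, ∀ i, f^[n] x1 i ≤ f^[n + 1] x1 i) ∧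
       (f x1 ≤ x1 → ∀ n : ℕ, ∀ i, f^[n + 1] x1 i ≤ f^[n] x1 i)) := by
  intro x1 hx1
  have hnn : ∀ n : ℕ, ∀ i, 0 ≤ f^[n] x1 i := by
    intro n
    induction n with
    | zero => exact hx1
    | succ m ih =>
      intro i
      rw [Function.iterate_succ_apply']
      exact (hpos _ ih i).le
  constructor
  · intro h0 n
    induction n with
    | zero =>
      intro i
      rw [Function.iterate_succ_apply']
      simp only [Function.iterate_zero, id_eq, h0]
      exact le_of_lt (hpos 0 (fun _ => le_refl 0) i)
    | succ m ih =>
      intro i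
      rw [Function.iterate_succ_apply', Function.iterate_succ_apply']
      exact hmono _ _ (hnn m) (fun j => ih j) i
  · intro hdec n
    induction n with
    | zero =>
      intro i
      simpa using hdec i
    | succ m ih =>
      intro i
      rw [Function.iterate_succ_apply']
      conv_rhs => rw [Function.iterate_succ_apply']
      exact hmono _ _ (hnn (m + 1)) (fun j => ih j) i
end

section
/- The function h : (0,∞) → ℝ defined by h(x) = 1 / log₂(1 + 1/x) is concave on (0,∞). -/
open Set Real

/-- Auxiliary: `2u ≤ log(1+u) - log(1-u)` for `u ∈ [0,1)`. -/
lemma aux_log_ineq {u : ℝ} (hu0 : 0 ≤ u) (hu1 : u < 1) :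
    2 * u ≤ Real.log (1 + u) - Real.log (1 - u) := by
  set φ : ℝ → ℝ := fun t => Real.log (1 + t) - Real.log (1 - t) - 2 * t with hφ
  have hd : ∀ t ∈ Set.Ico (0:ℝ) 1, HasDerivAt φ (1/(1+t) + 1/(1-t) - 2) t := by
    intro t ht
    have h1t : (0:ℝ) < 1 + t := by linarith [ht.1]
    have h2t : (0:ℝ) < 1 - t := by linarith [ht.2]
    have ha : HasDerivAt (fun t : ℝ => 1 + t) 1 t := (hasDerivAt_id t).const_add 1
    have hb : HasDerivAt (fun t : ℝ => 1 - t) (-1) t := by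
      simpa using (hasDerivAt_id t).const_sub 1
    have hla := ha.log h1t.ne'
    have hlb := hb.log h2t.ne'
    have hc : HasDerivAt (fun t : ℝ => 2 * t) 2 t := by
      simpa using (hasDerivAt_id t).const_mul 2
    have := (hla.sub hlb).sub hc
    refine this.congr_deriv ?_
    ring
  have hmono : MonotoneOn φ (Set.Ico (0:ℝ) 1) := by
    apply monotoneOn_of_deriv_nonneg (convex_Ico 0 1)
    · exact fun t ht => (hd t ht).continuousAt.continuousWithinAt
    · rw [interior_Ico]
      exact fun t ht => (hd t (Set.Ioo_subset_Ico_self ht)).differentiableAt.differentiableWithinAt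
    · rw [interior_Ico]
      intro t ht
      rw [(hd t (Set.Ioo_subset_Ico_self ht)).deriv]
      have h1t : (0:ℝ) < 1 + t := by linarith [ht.1]
      have h2t : (0:ℝ) < 1 - t := by linarith [ht.2]
      have : 1/(1+t) + 1/(1-t) - 2 = 2*t^2/((1+t)*(1-t)) := by field_simp; ring
      rw [this]; positivity
  have h0 : φ 0 ≤ φ u := hmono (by constructor <;> norm_num) ⟨hu0, hu1⟩ hu0
  have : φ 0 = 0 := by simp [hφ]
  rw [this] at h0
  simp only [hφ] at h0
  linarith

/-- Key inequality: `2/(2x+1) ≤ log(1 + 1/x)` for `x > 0`. -/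
lemma key_ineq {x : ℝ} (hx : 0 < x) : 2 ≤ (2*x+1) * Real.log (1 + 1/x) := by
  have h21 : (0:ℝ) < 2*x+1 := by linarith
  set u : ℝ := 1/(2*x+1) with hu
  have hu0 : 0 < u := by positivity
  have hu1 : u < 1 := by
    rw [hu, div_lt_one h21]; linarith
  have hkey := aux_log_ineq hu0.le hu1
  have h1u : (1:ℝ) + u = (2*x+2)/(2*x+1) := by rw [hu]; field_simp; ring
  have h2u : (1:ℝ) - u = (2*x)/(2*x+1) := by rw [hu]; field_simp; ring
  have hlog : Real.log (1+u) - Real.log (1-u) = Real.log (1 + 1/x) := by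
    rw [h1u, h2u, ← Real.log_div (by positivity) (by positivity)]
    congr 1
    field_simp
  rw [hlog] at hkey
  calc (2:ℝ) = (2*x+1) * (2*u) := by rw [hu]; field_simp
    _ ≤ (2*x+1) * Real.log (1+1/x) := mul_le_mul_of_nonneg_left hkey h21.le

/-- The function `h(x) = 1 / log₂(1 + 1/x)` is concave on `(0, ∞)`. -/
theorem concave_inv_logb_one_add_inv :
    ConcaveOn ℝ (Set.Ioi (0 : ℝ)) (fun x : ℝ => 1 / Real.logb 2 (1 + 1 / x)) := by
  set g : ℝ → ℝ := fun x => Real.log (1 + 1/x) with hgdef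
  have hg_pos : ∀ x : ℝ, 0 < x → 0 < g x := by
    intro x hx
    apply Real.log_pos
    have : 0 < 1/x := by positivity
    linarith
  have hg : ∀ x : ℝ, 0 < x → HasDerivAt g (-(1/(x*(x+1)))) x := by
    intro x hx
    have h1 : HasDerivAt (fun x : ℝ => 1 + 1/x) (-(x^2)⁻¹) x := by
      simpa using (hasDerivAt_inv hx.ne').const_add 1
    have hne : (1:ℝ) + 1/x ≠ 0 := by positivity
    have h2 := h1.log hne
    convert h2 using 1
    field_simp
  set F : ℝ → ℝ := fun x => Real.log 2 * (g x)⁻¹ with hFdef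
  set F' : ℝ → ℝ := fun x => Real.log 2 / (x*(x+1)*(g x)^2) with hF'def
  set F'' : ℝ → ℝ := fun x =>
    Real.log 2 * (2 - (2*x+1) * g x) / ((x*(x+1))^2 * (g x)^3) with hF''def
  have hF : ∀ x : ℝ, 0 < x → HasDerivAt F (F' x) x := by
    intro x hx
    have h := ((hg x hx).inv (hg_pos x hx).ne').const_mul (Real.log 2)
    refine h.congr_deriv ?_
    have hgx := (hg_pos x hx).ne'
    rw [hF'def]
    field_simp
  have hF' : ∀ x : ℝ, 0 < x → HasDerivAt F' (F'' x) x := by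
    intro x hx
    have hx1 : HasDerivAt (fun x : ℝ => x*(x+1)) (1*(x+1) + x*1) x :=
      (hasDerivAt_id x).mul ((hasDerivAt_id x).add_const 1)
    have hpow := (hg x hx).pow 2
    have hD := hx1.mul hpow
    have hDne : x*(x+1)*(g x)^2 ≠ 0 := by
      have := hg_pos x hx
      positivity
    have h := (hasDerivAt_const x (Real.log 2)).div hD hDne
    refine h.congr_deriv ?_
    have hgx := (hg_pos x hx).ne'
    have hx1ne : x + 1 ≠ 0 := by positivity
    rw [hF''def]
    simp only [Pi.mul_apply, Pi.pow_apply]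
    field_simp
    ring
  have hmain : ConcaveOn ℝ (Set.Ioi (0:ℝ)) F := by
    apply concaveOn_of_hasDerivWithinAt2_nonpos (convex_Ioi 0) (f' := F') (f'' := F'')
    · intro x hx
      exact ((hF x hx).continuousAt).continuousWithinAt
    · rw [interior_Ioi]
      intro x hx
      exact (hF x hx).hasDerivWithinAt
    · rw [interior_Ioi]
      intro x hx
      exact (hF' x hx).hasDerivWithinAt
    · rw [interior_Ioi]
      intro x hx
      rw [hF''def]
      apply div_nonpos_of_nonpos_of_nonneg
      · apply mul_nonpos_of_nonneg_of_nonpos (Real.log_nonneg (by norm_num))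
        have := key_ineq hx
        linarith
      · have := hg_pos x hx
        have hx' : (0:ℝ) < x := hx
        positivity
  apply hmain.congr
  intro x hx
  simp only [Set.mem_Ioi] at hx
  have hgx : g x ≠ 0 := (hg_pos x hx).ne'
  simp only [hFdef, Real.logb, one_div, hgdef]
  rw [inv_div, div_eq_mul_inv]
end

section
/- Let f : ℝ₊ᵏ → ℝᵏ be componentwise concave on the nonnegative orthant and positive-valued (f(x) > 0 componentwise for all x ∈ ℝ₊ᵏ). Then f is a standard interference function, i.e., f is monotone (x ≤ y componentwise implies f(x) ≤ f(y) componentwise) and scalable (for every α > 1 and every x ∈ ℝ₊ᵏ, α·f(x) > f(α·x) componentwise). -/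
/-- A componentwise concave, positive-valued function on the nonnegative
orthant is a standard interference function, i.e., it is monotone and scalable. -/
theorem positive_concave_is_sif (k : ℕ) (f : (Fin k → ℝ) → (Fin k → ℝ))
    (hconc : ∀ l, ConcaveOn ℝ {x : Fin k → ℝ | ∀ i, 0 ≤ x i} (fun x => f x l))
    (hpos : ∀ x : Fin k → ℝ, (∀ i, 0 ≤ x i) → ∀ l, 0 < f x l) :
    (∀ x y : Fin k → ℝ, (∀ i, 0 ≤ x i) → x ≤ y → f x ≤ f y) ∧
    (∀ α : ℝ, 1 < α → ∀ x : Fin k → ℝ, (∀ i, 0 ≤ x i) →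
      ∀ l, f (α • x) l < α * f x l) := by
  constructor
  · intro x y hx hxy
    rw [Pi.le_def]
    intro l
    by_contra h
    push_neg at h
    have hfx : 0 < f x l := hpos x hx l
    set d : ℝ := f x l - f y l with hd
    have hdpos : 0 < d := by linarith
    set s : ℝ := f x l / d + 1 with hs
    have hs1 : 1 < s := by
      rw [hs]
      have : 0 < f x l / d := div_pos hfx hdpos
      linarith
    have hs0 : 0 < s := by linarith
    set z : Fin k → ℝ := x + s • (y - x) with hz
    have hzmem : z ∈ {x : Fin k → ℝ | ∀ i, 0 ≤ x i} := by
      intro i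
      have h1 := hxy i
      have h2 := hx i
      simp only [hz, Pi.add_apply, Pi.smul_apply, Pi.sub_apply, smul_eq_mul]
      nlinarith
    have hxmem : x ∈ {x : Fin k → ℝ | ∀ i, 0 ≤ x i} := hx
    have hbpos : (0:ℝ) < 1/s := by positivity
    have ha : (0:ℝ) ≤ 1 - 1/s := by
      have : 1/s < 1 := by rw [div_lt_one hs0]; exact hs1
      linarith
    have hb : (0:ℝ) ≤ 1/s := le_of_lt hbpos
    have hab : (1 - 1/s) + 1/s = 1 := by ring
    have hcomb : (1 - 1/s) • x + (1/s) • z = y := by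
      funext i
      simp only [hz, Pi.add_apply, Pi.smul_apply, Pi.sub_apply, smul_eq_mul]
      field_simp
      ring
    have hineq := (hconc l).2 hxmem hzmem ha hb hab
    rw [hcomb] at hineq
    simp only [smul_eq_mul] at hineq
    have hfz : 0 < f z l := hpos z hzmem l
    have key : f x l - f y l ≤ f x l / s := by
      have h1 : (1 - 1/s) * f x l ≤ f y l := by nlinarith
      have h2 : f x l / s = (1/s) * f x l := by ring
      nlinarith
    have hlt : f x l / s < d := by
      rw [div_lt_iff₀ hs0]
      have hds : d * s = f x l + d := by rw [hs]; field_simp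
      nlinarith
    linarith
  · intro α hα x hx l
    have hα0 : 0 < α := by linarith
    have hxmem : α • x ∈ {x : Fin k → ℝ | ∀ i, 0 ≤ x i} := by
      intro i
      simp only [Pi.smul_apply, smul_eq_mul]
      exact mul_nonneg hα0.le (hx i)
    have h0mem : (0 : Fin k → ℝ) ∈ {x : Fin k → ℝ | ∀ i, 0 ≤ x i} := fun i => le_refl 0
    have ha : (0:ℝ) ≤ 1/α := by positivity
    have hbpos : 0 < 1 - 1/α := by
      have : 1/α < 1 := by rw [div_lt_one hα0]; exact hα
      linarith
    have hb : (0:ℝ) ≤ 1 - 1/α := le_of_lt hbpos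
    have hab : (1/α) + (1 - 1/α) = 1 := by ring
    have hcomb : (1/α) • (α • x) + (1 - 1/α) • (0 : Fin k → ℝ) = x := by
      funext i
      simp only [Pi.add_apply, Pi.smul_apply, Pi.zero_apply, smul_eq_mul]
      field_simp
      ring
    have hineq := (hconc l).2 hxmem h0mem ha hb hab
    rw [hcomb] at hineq
    simp only [smul_eq_mul] at hineq
    have hf0 : 0 < f 0 l := hpos 0 h0mem l
    have hkey : (1/α) * f (α • x) l < f x l := by nlinarith
    calc f (α • x) l = α * ((1/α) * f (α • x) l) := by field_simp
      _ < α * f x l := by nlinarith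
end

section
/- Let g : ℝ₊₊ᵏ → ℝ₊₊ be monotone (x ≤ y componentwise implies g(x) ≤ g(y)) and homogeneous of degree 1 (g(αx) = α·g(x) for all α > 0 and x ∈ ℝ₊₊ᵏ), and define h : ℝ₊₊ᵏ → ℝ₊₊ᵏ by h(x) = x / g(x). Then h is nonexpansive with respect to the metric μ_s, i.e., μ_s(h(x), h(y)) ≤ μ_s(x, y) for all x, y ∈ ℝ₊₊ᵏ. -/
/-- The metric `μ_s(x, y) = max_i (log (x i / y i))⁺ + max_i (log (y i / x i))⁺`
on the positive orthant. -/
noncomputable def muS {k : ℕ} (x y : Fin k → ℝ) : ℝ :=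
  (⨆ i : Fin k, max (Real.log (x i / y i)) 0) +
    (⨆ i : Fin k, max (Real.log (y i / x i)) 0)

/-- If `g : ℝ₊₊ᵏ → ℝ₊₊` is monotone and homogeneous of degree 1, then
`h(x) = x / g(x)` is nonexpansive with respect to the metric `μ_s`. -/
theorem normalization_nonexpansive (k : ℕ) (g : (Fin k → ℝ) → ℝ)
    (hgpos : ∀ x : Fin k → ℝ, (∀ i, 0 < x i) → 0 < g x)
    (hgmono : ∀ x y : Fin k → ℝ, (∀ i, 0 < x i) → (∀ i, 0 < y i) → x ≤ y → g x ≤ g y)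
    (hghom : ∀ α : ℝ, 0 < α → ∀ x : Fin k → ℝ, (∀ i, 0 < x i) → g (α • x) = α * g x) :
    ∀ x y : Fin k → ℝ, (∀ i, 0 < x i) → (∀ i, 0 < y i) →
      muS ((g x)⁻¹ • x) ((g y)⁻¹ • y) ≤ muS x y := by
  intro x y hx hy
  rcases Nat.eq_zero_or_pos k with hk | hk
  · subst hk
    simp [muS, ciSup_of_empty]
  have hne : Nonempty (Fin k) := ⟨⟨0, hk⟩⟩
  have hapos := hgpos x hx
  have hbpos := hgpos y hy
  set a := g x with ha
  set b := g y with hb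
  set M := ⨆ i : Fin k, max (Real.log (x i / y i)) 0 with hM
  set m := ⨆ i : Fin k, max (Real.log (y i / x i)) 0 with hm
  have bdd1 : BddAbove (Set.range fun i : Fin k => max (Real.log (x i / y i)) 0) :=
    Set.Finite.bddAbove (Set.finite_range _)
  have bdd2 : BddAbove (Set.range fun i : Fin k => max (Real.log (y i / x i)) 0) :=
    Set.Finite.bddAbove (Set.finite_range _)
  have hle1 : ∀ i, Real.log (x i / y i) ≤ M := fun i =>
    le_trans (le_max_left _ _) (le_ciSup bdd1 i)
  have hle2 : ∀ i, Real.log (y i / x i) ≤ m := fun i =>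
    le_trans (le_max_left _ _) (le_ciSup bdd2 i)
  -- x ≤ exp M • y and y ≤ exp m • x
  have hxy : x ≤ Real.exp M • y := by
    intro i
    have h1 : x i / y i ≤ Real.exp M := by
      calc x i / y i = Real.exp (Real.log (x i / y i)) :=
            (Real.exp_log (div_pos (hx i) (hy i))).symm
        _ ≤ Real.exp M := Real.exp_le_exp.mpr (hle1 i)
    have := (div_le_iff₀ (hy i)).mp h1
    simpa [smul_eq_mul] using this
  have hyx : y ≤ Real.exp m • x := by
    intro i
    have h1 : y i / x i ≤ Real.exp m := by
      calc y i / x i = Real.exp (Real.log (y i / x i)) :=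
            (Real.exp_log (div_pos (hy i) (hx i))).symm
        _ ≤ Real.exp m := Real.exp_le_exp.mpr (hle2 i)
    have := (div_le_iff₀ (hx i)).mp h1
    simpa [smul_eq_mul] using this
  have hMy : ∀ i, 0 < (Real.exp M • y) i := fun i => by
    simpa [smul_eq_mul] using mul_pos (Real.exp_pos M) (hy i)
  have hmx : ∀ i, 0 < (Real.exp m • x) i := fun i => by
    simpa [smul_eq_mul] using mul_pos (Real.exp_pos m) (hx i)
  have hga : a ≤ Real.exp M * b := by
    have := hgmono x (Real.exp M • y) hx hMy hxy
    rwa [hghom _ (Real.exp_pos M) y hy] at this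
  have hgb : b ≤ Real.exp m * a := by
    have := hgmono y (Real.exp m • x) hy hmx hyx
    rwa [hghom _ (Real.exp_pos m) x hx] at this
  set c := Real.log b - Real.log a with hc
  have hc1 : -M ≤ c := by
    have h := (Real.log_le_log_iff hapos (mul_pos (Real.exp_pos M) hbpos)).mpr hga
    rw [Real.log_mul (Real.exp_ne_zero M) (ne_of_gt hbpos), Real.log_exp] at h
    simp only [hc]; linarith
  have hc2 : c ≤ m := by
    have h := (Real.log_le_log_iff hbpos (mul_pos (Real.exp_pos m) hapos)).mpr hgb
    rw [Real.log_mul (Real.exp_ne_zero m) (ne_of_gt hapos), Real.log_exp] at h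
    simp only [hc]; linarith
  have key1 : ∀ i, Real.log ((a⁻¹ • x) i / (b⁻¹ • y) i) = Real.log (x i / y i) + c := by
    intro i
    have heq : (a⁻¹ • x) i / (b⁻¹ • y) i = (x i / y i) * (b / a) := by
      simp only [Pi.smul_apply, smul_eq_mul]
      field_simp
    rw [heq, Real.log_mul (ne_of_gt (div_pos (hx i) (hy i))) (ne_of_gt (div_pos hbpos hapos)),
      Real.log_div (ne_of_gt hbpos) (ne_of_gt hapos)]
  have key2 : ∀ i, Real.log ((b⁻¹ • y) i / (a⁻¹ • x) i) = Real.log (y i / x i) - c := by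
    intro i
    have heq : (b⁻¹ • y) i / (a⁻¹ • x) i = (y i / x i) * (a / b) := by
      simp only [Pi.smul_apply, smul_eq_mul]
      field_simp
    rw [heq, Real.log_mul (ne_of_gt (div_pos (hy i) (hx i))) (ne_of_gt (div_pos hapos hbpos)),
      Real.log_div (ne_of_gt hapos) (ne_of_gt hbpos)]
    simp only [hc]; ring
  have hsum1 : (⨆ i : Fin k, max (Real.log ((a⁻¹ • x) i / (b⁻¹ • y) i)) 0) ≤ M + c := by
    refine ciSup_le fun i => ?_
    rw [key1 i]
    exact max_le (by linarith [hle1 i]) (by linarith)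
  have hsum2 : (⨆ i : Fin k, max (Real.log ((b⁻¹ • y) i / (a⁻¹ • x) i)) 0) ≤ m - c := by
    refine ciSup_le fun i => ?_
    rw [key2 i]
    exact max_le (by linarith [hle2 i]) (by linarith)
  show (⨆ i : Fin k, max (Real.log ((a⁻¹ • x) i / (b⁻¹ • y) i)) 0) +
      (⨆ i : Fin k, max (Real.log ((b⁻¹ • y) i / (a⁻¹ • x) i)) 0) ≤ M + m
  linarith
end

section
/- Let f : ℝ₊ᵏ → ℝ₊₊ᵏ be a standard interference function, let g : ℝ₊₊ᵏ → ℝ₊₊ be monotone and homogeneous of degree 1, and let θ > 0. Then the map ψ(x) := θ·f(x)/g(f(x)) is contractive (shrinking) on ℝ₊₊ᵏ with respect to the metric μ_s: for all x, y ∈ ℝ₊₊ᵏ with x ≠ y, μ_s(ψ(x), ψ(y)) < μ_s(x, y). -/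
/-- If `f` is a standard interference function, `g : ℝ₊₊ᵏ → ℝ₊₊` is
monotone and homogeneous of degree 1, and `θ > 0`, then `ψ(x) = θ·f(x)/g(f(x))`
is contractive (shrinking) on the positive orthant with respect to `μ_s`. -/
theorem normalized_sif_contractive (k : ℕ) (f : (Fin k → ℝ) → (Fin k → ℝ))
    (hpos : ∀ x : Fin k → ℝ, (∀ i, 0 ≤ x i) → ∀ i, 0 < f x i)
    (hmono : ∀ x y : Fin k → ℝ, (∀ i, 0 ≤ x i) → x ≤ y → f x ≤ f y)
    (hscale : ∀ α : ℝ, 1 < α → ∀ x : Fin k → ℝ, (∀ i, 0 ≤ x i) →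
      ∀ i, f (α • x) i < α * f x i)
    (g : (Fin k → ℝ) → ℝ)
    (hgpos : ∀ x : Fin k → ℝ, (∀ i, 0 < x i) → 0 < g x)
    (hgmono : ∀ x y : Fin k → ℝ, (∀ i, 0 < x i) → (∀ i, 0 < y i) → x ≤ y → g x ≤ g y)
    (hghom : ∀ α : ℝ, 0 < α → ∀ x : Fin k → ℝ, (∀ i, 0 < x i) → g (α • x) = α * g x)
    (θ : ℝ) (hθ : 0 < θ) :
    ∀ x y : Fin k → ℝ, (∀ i, 0 < x i) → (∀ i, 0 < y i) → x ≠ y →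
      muS ((θ / g (f x)) • f x) ((θ / g (f y)) • f y) < muS x y := by
  intro x y hx hy hxy
  obtain ⟨i₀, hi₀⟩ := Function.ne_iff.mp hxy
  haveI : Nonempty (Fin k) := ⟨i₀⟩
  have bdd : ∀ a : Fin k → ℝ, BddAbove (Set.range a) := fun a =>
    (Set.finite_range a).bddAbove
  have hx0 : ∀ i, 0 ≤ x i := fun i => (hx i).le
  have hy0 : ∀ i, 0 ≤ y i := fun i => (hy i).le
  have hu : ∀ i, 0 < f x i := hpos x hx0
  have hv : ∀ i, 0 < f y i := hpos y hy0
  have hgu : 0 < g (f x) := hgpos _ hu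
  have hgv : 0 < g (f y) := hgpos _ hv
  set A := ⨆ i, max (Real.log (x i / y i)) 0 with hA
  set B := ⨆ i, max (Real.log (y i / x i)) 0 with hB
  set M := ⨆ i, Real.log (f x i / f y i) with hM
  set m := ⨆ i, Real.log (f y i / f x i) with hm
  set t := Real.log (g (f y)) - Real.log (g (f x)) with ht
  -- key component fact, stated generically for the pair (a,b) ∈ {(x,y),(y,x)}
  have key : ∀ (a b : Fin k → ℝ), (∀ i, 0 < a i) → (∀ i, 0 < b i) →
      (⨆ i, Real.log (f a i / f b i)) ≤ (⨆ i, max (Real.log (a i / b i)) 0) ∧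
      (0 < (⨆ i, max (Real.log (a i / b i)) 0) →
        (⨆ i, Real.log (f a i / f b i)) < ⨆ i, max (Real.log (a i / b i)) 0) := by
    intro a b ha hb
    set C := ⨆ i, max (Real.log (a i / b i)) 0 with hC
    have ha0 : ∀ i, 0 ≤ a i := fun i => (ha i).le
    have hb0 : ∀ i, 0 ≤ b i := fun i => (hb i).le
    have hfa : ∀ i, 0 < f a i := hpos a ha0
    have hfb : ∀ i, 0 < f b i := hpos b hb0
    have hC0 : 0 ≤ C := by
      rw [hC]
      exact le_trans (le_max_right _ 0)
        (le_ciSup (bdd fun i => max (Real.log (a i / b i)) 0) i₀)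
    have hab : ∀ i, a i ≤ Real.exp C * b i := by
      intro i
      have h1 : Real.log (a i / b i) ≤ C := by
        rw [hC]
        exact le_trans (le_max_left _ _)
          (le_ciSup (bdd fun i => max (Real.log (a i / b i)) 0) i)
      have h2 : a i / b i ≤ Real.exp C :=
        (Real.log_le_iff_le_exp (div_pos (ha i) (hb i))).mp h1
      exact (div_le_iff₀ (hb i)).mp h2
    obtain ⟨j, hj⟩ := Finite.exists_max (fun i => Real.log (f a i / f b i))
    rcases lt_or_eq_of_le hC0 with hCpos | hCzero
    · -- strict case
      have hexp : 1 < Real.exp C := by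
        calc (1:ℝ) = Real.exp 0 := Real.exp_zero.symm
        _ < Real.exp C := Real.exp_lt_exp.mpr hCpos
      have hle : f a ≤ f (Real.exp C • b) := by
        apply hmono a _ ha0
        intro i
        simpa [smul_eq_mul] using hab i
      have hstrict : ∀ i, f a i < Real.exp C * f b i := fun i =>
        lt_of_le_of_lt (hle i) (hscale _ hexp b hb0 i)
      have hlog : ∀ i, Real.log (f a i / f b i) < C := by
        intro i
        have : f a i / f b i < Real.exp C := (div_lt_iff₀ (hfb i)).mpr (hstrict i)
        have := Real.log_lt_log (div_pos (hfa i) (hfb i)) this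
        simpa [Real.log_exp] using this
      have hMC : (⨆ i, Real.log (f a i / f b i)) < C :=
        lt_of_le_of_lt (ciSup_le hj) (hlog j)
      exact ⟨hMC.le, fun _ => hMC⟩
    · -- C = 0 case: a ≤ b
      have habc : ∀ i, a i ≤ b i := by
        intro i
        have := hab i
        rw [← hCzero, Real.exp_zero, one_mul] at this
        exact this
      have hle : f a ≤ f b := hmono a b ha0 (fun i => habc i)
      have hlog : ∀ i, Real.log (f a i / f b i) ≤ 0 := by
        intro i
        apply Real.log_nonpos (le_of_lt (div_pos (hfa i) (hfb i)))
        exact (div_le_one (hfb i)).mpr (hle i)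
      constructor
      · rw [← hCzero]; exact ciSup_le hlog
      · intro h; rw [← hCzero] at h; exact absurd h (lt_irrefl 0)
  have hMA := key x y hx hy
  have hmB := key y x hy hx
  -- 0 ≤ A, 0 ≤ B
  have hA0 : 0 ≤ A := by
    rw [hA]
    exact le_trans (le_max_right _ 0)
      (le_ciSup (bdd fun i => max (Real.log (x i / y i)) 0) i₀)
  have hB0 : 0 ≤ B := by
    rw [hB]
    exact le_trans (le_max_right _ 0)
      (le_ciSup (bdd fun i => max (Real.log (y i / x i)) 0) i₀)
  -- A + B > 0
  have hABpos : 0 < A ∨ 0 < B := by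
    rcases lt_or_gt_of_ne hi₀ with h | h
    · right
      have h1 : (0:ℝ) < Real.log (y i₀ / x i₀) :=
        Real.log_pos ((one_lt_div (hx i₀)).mpr h)
      have h2 : max (Real.log (y i₀ / x i₀)) 0 ≤ B := by
        rw [hB]; exact le_ciSup (bdd fun i => max (Real.log (y i / x i)) 0) i₀
      exact lt_of_lt_of_le h1 (le_trans (le_max_left _ _) h2)
    · left
      have h1 : (0:ℝ) < Real.log (x i₀ / y i₀) :=
        Real.log_pos ((one_lt_div (hy i₀)).mpr h)
      have h2 : max (Real.log (x i₀ / y i₀)) 0 ≤ A := by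
        rw [hA]; exact le_ciSup (bdd fun i => max (Real.log (x i / y i)) 0) i₀
      exact lt_of_lt_of_le h1 (le_trans (le_max_left _ _) h2)
  -- bounds on t : -M ≤ t ≤ m
  have tbound : ∀ (a b : Fin k → ℝ), (∀ i, 0 < a i) → (∀ i, 0 < b i) →
      Real.log (g (f b)) - Real.log (g (f a)) ≤ ⨆ i, Real.log (f b i / f a i) := by
    intro a b ha hb
    set m' := ⨆ i, Real.log (f b i / f a i) with hm'
    have ha0 : ∀ i, 0 ≤ a i := fun i => (ha i).le
    have hb0 : ∀ i, 0 ≤ b i := fun i => (hb i).le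
    have hfa : ∀ i, 0 < f a i := hpos a ha0
    have hfb : ∀ i, 0 < f b i := hpos b hb0
    have hba : ∀ i, f b i ≤ Real.exp m' * f a i := by
      intro i
      have h1 : Real.log (f b i / f a i) ≤ m' := by
        rw [hm']
        exact le_ciSup (bdd fun i => Real.log (f b i / f a i)) i
      have h2 : f b i / f a i ≤ Real.exp m' :=
        (Real.log_le_iff_le_exp (div_pos (hfb i) (hfa i))).mp h1
      exact (div_le_iff₀ (hfa i)).mp h2
    have hgle : g (f b) ≤ g (Real.exp m' • f a) := by
      apply hgmono _ _ hfb
      · intro i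
        simp only [Pi.smul_apply, smul_eq_mul]
        exact mul_pos (Real.exp_pos _) (hfa i)
      · intro i
        simpa [smul_eq_mul] using hba i
    rw [hghom _ (Real.exp_pos m') _ hfa] at hgle
    have := Real.log_le_log (hgpos _ hfb) hgle
    rw [Real.log_mul (Real.exp_ne_zero _) (ne_of_gt (hgpos _ hfa)), Real.log_exp] at this
    linarith
  have htm : t ≤ m := tbound x y hx hy
  have htM : -M ≤ t := by
    have := tbound y x hy hx
    rw [ht, hM]; linarith
  -- compute muS of the psi values
  have hpsilog : ∀ i, Real.log (((θ / g (f x)) • f x) i / ((θ / g (f y)) • f y) i)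
      = t + Real.log (f x i / f y i) := by
    intro i
    have hne1 : ((θ / g (f x)) * f x i) ≠ 0 :=
      ne_of_gt (mul_pos (div_pos hθ hgu) (hu i))
    have hne2 : ((θ / g (f y)) * f y i) ≠ 0 :=
      ne_of_gt (mul_pos (div_pos hθ hgv) (hv i))
    simp only [Pi.smul_apply, smul_eq_mul]
    rw [Real.log_div hne1 hne2,
      Real.log_mul (ne_of_gt (div_pos hθ hgu)) (ne_of_gt (hu i)),
      Real.log_mul (ne_of_gt (div_pos hθ hgv)) (ne_of_gt (hv i)),
      Real.log_div (ne_of_gt hθ) (ne_of_gt hgu),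
      Real.log_div (ne_of_gt hθ) (ne_of_gt hgv),
      Real.log_div (ne_of_gt (hu i)) (ne_of_gt (hv i))]
    ring
  -- M + m ≥ 0
  have hMm : 0 ≤ M + m := by
    have h1 : Real.log (f x i₀ / f y i₀) ≤ M := by
      rw [hM]; exact le_ciSup (bdd fun i => Real.log (f x i / f y i)) i₀
    have h2 : Real.log (f y i₀ / f x i₀) ≤ m := by
      rw [hm]; exact le_ciSup (bdd fun i => Real.log (f y i / f x i)) i₀
    have h3 : Real.log (f x i₀ / f y i₀) + Real.log (f y i₀ / f x i₀) = 0 := by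
      rw [Real.log_div (ne_of_gt (hu i₀)) (ne_of_gt (hv i₀)),
        Real.log_div (ne_of_gt (hv i₀)) (ne_of_gt (hu i₀))]
      ring
    linarith
  -- sup of max(t + a i, 0) = t + M, when t + M ≥ 0
  have supmax : ∀ (c : ℝ) (a : Fin k → ℝ), 0 ≤ c + (⨆ i, a i) →
      (⨆ i, max (c + a i) 0) = c + (⨆ i, a i) := by
    intro c a hnn
    apply le_antisymm
    · apply ciSup_le
      intro i
      apply max_le _ hnn
      have : a i ≤ ⨆ i, a i := le_ciSup (bdd a) i
      linarith
    · obtain ⟨j, hj⟩ := Finite.exists_max a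
      have h1 : (⨆ i, a i) ≤ a j := ciSup_le hj
      calc c + (⨆ i, a i) ≤ c + a j := by linarith
      _ ≤ max (c + a j) 0 := le_max_left _ _
      _ ≤ ⨆ i, max (c + a i) 0 := le_ciSup (bdd fun i => max (c + a i) 0) j
  have hmu1 : (⨆ i, max (Real.log (((θ / g (f x)) • f x) i / ((θ / g (f y)) • f y) i)) 0)
      = t + M := by
    have := supmax t (fun i => Real.log (f x i / f y i)) (by rw [← hM]; linarith)
    rw [← hM] at this
    rw [← this]
    congr 1
    funext i
    rw [hpsilog i]
  have hpsilog' : ∀ i, Real.log (((θ / g (f y)) • f y) i / ((θ / g (f x)) • f x) i)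
      = -t + Real.log (f y i / f x i) := by
    intro i
    simp only [Pi.smul_apply, smul_eq_mul]
    rw [Real.log_div (ne_of_gt (mul_pos (div_pos hθ hgv) (hv i)))
        (ne_of_gt (mul_pos (div_pos hθ hgu) (hu i))),
      Real.log_mul (ne_of_gt (div_pos hθ hgv)) (ne_of_gt (hv i)),
      Real.log_mul (ne_of_gt (div_pos hθ hgu)) (ne_of_gt (hu i)),
      Real.log_div (ne_of_gt hθ) (ne_of_gt hgv),
      Real.log_div (ne_of_gt hθ) (ne_of_gt hgu),
      Real.log_div (ne_of_gt (hv i)) (ne_of_gt (hu i))]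
    ring
  have hmu2 : (⨆ i, max (Real.log (((θ / g (f y)) • f y) i / ((θ / g (f x)) • f x) i)) 0)
      = -t + m := by
    have := supmax (-t) (fun i => Real.log (f y i / f x i)) (by rw [← hm]; linarith)
    rw [← hm] at this
    rw [← this]
    congr 1
    funext i
    rw [hpsilog' i]
  have hmuS : muS ((θ / g (f x)) • f x) ((θ / g (f y)) • f y) = M + m := by
    rw [muS, hmu1, hmu2]; ring
  have hmuxy : muS x y = A + B := rfl
  rw [hmuS, hmuxy]
  rcases hABpos with hApos | hBpos
  · have h1 := (hMA.2) hApos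
    have h2 := hmB.1
    rw [← hM] at h1; rw [← hm, ← hB] at h2
    linarith
  · have h1 := (hmB.2) hBpos
    have h2 := hMA.1
    rw [← hm, ← hB] at h1; rw [← hM] at h2
    linarith
end

section
/- For every fixed power vector p' ∈ ℝ₊₊^{2K}, the function f_{p'} : ℝ₊^{2K} → ℝ₊₊^{2K}, whose l-th component is f_{p',l}(w) = d_l / (W₀ B log₂(1 + SINR_l(p', w))), is a standard interference function: it is positive-valued, monotone (w ≤ w̃ componentwise implies f_{p'}(w) ≤ f_{p'}(w̃) componentwise), and scalable (for every α > 1 and every w ∈ ℝ₊^{2K}, α·f_{p'}(w) > f_{p'}(α·w) componentwise). -/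
lemma log_scale {α s : ℝ} (hα : 1 < α) (hs : 0 ≤ s) :
    Real.log (1 + s) ≤ α * Real.log (1 + s / α) := by
  have hα0 : 0 < α := lt_trans one_pos hα
  have h1 : (1 + s : ℝ) ∈ Set.Ioi (0:ℝ) := by simp; linarith
  have h2 : (1 : ℝ) ∈ Set.Ioi (0:ℝ) := by norm_num
  have ha : (0:ℝ) ≤ 1/α := by positivity
  have hb : (0:ℝ) ≤ 1 - 1/α := by
    have : 1/α ≤ 1 := by rw [div_le_one hα0]; linarith
    linarith
  have hab : 1/α + (1 - 1/α) = 1 := by ring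
  have key := strictConcaveOn_log_Ioi.concaveOn.2 h1 h2 ha hb hab
  have heq : (1/α) • (1 + s) + (1 - 1/α) • (1:ℝ) = 1 + s / α := by
    simp only [smul_eq_mul]; field_simp; ring
  rw [heq, Real.log_one] at key
  simp only [smul_eq_mul, mul_zero, add_zero] at key
  have : (1/α) * Real.log (1 + s) ≤ Real.log (1 + s / α) := by linarith
  calc Real.log (1 + s) = α * ((1/α) * Real.log (1 + s)) := by field_simp
    _ ≤ α * Real.log (1 + s / α) := by
        exact mul_le_mul_of_nonneg_left this (le_of_lt hα0)

/-- Interference at link `l`: `I_l(p, w) = ((Ṽ · diag(p) · w)_l + σ²) / v_l`. -/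
noncomputable def interf {K : ℕ} (V : Matrix (Fin (2 * K)) (Fin (2 * K)) ℝ)
    (v : Fin (2 * K) → ℝ) (σ2 : ℝ) (p w : Fin (2 * K) → ℝ) (l : Fin (2 * K)) : ℝ :=
  ((∑ j, V l j * (p j * w j)) + σ2) / v l

/-- `f_l(p, w) = d_l / (W₀ B log₂(1 + SINR_l(p, w)))` with `SINR_l = p_l / I_l(p, w)`. -/
noncomputable def rateF {K : ℕ} (V : Matrix (Fin (2 * K)) (Fin (2 * K)) ℝ)
    (v : Fin (2 * K) → ℝ) (σ2 W0 B : ℝ) (d : Fin (2 * K) → ℝ)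
    (p w : Fin (2 * K) → ℝ) (l : Fin (2 * K)) : ℝ :=
  d l / (W0 * B * Real.logb 2 (1 + p l / interf V v σ2 p w l))

/-- Lemma 1 of the paper: For every fixed positive power vector `p'`,
the function `w ↦ f_{p'}(w)` is a standard interference function: positive-valued,
monotone, and scalable on the nonnegative orthant. -/
theorem rateF_is_sif (K : ℕ) (hK : 1 ≤ K)
    (V : Matrix (Fin (2 * K)) (Fin (2 * K)) ℝ) (hV : ∀ i j, 0 ≤ V i j)
    (v : Fin (2 * K) → ℝ) (hv : ∀ i, 0 < v i)
    (σ2 : ℝ) (hσ2 : 0 < σ2) (W0 B : ℝ) (hW0 : 0 < W0) (hB : 0 < B)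
    (d : Fin (2 * K) → ℝ) (hd : ∀ i, 0 < d i)
    (p' : Fin (2 * K) → ℝ) (hp' : ∀ i, 0 < p' i) :
    (∀ w : Fin (2 * K) → ℝ, (∀ i, 0 ≤ w i) → ∀ l, 0 < rateF V v σ2 W0 B d p' w l) ∧
    (∀ w w2 : Fin (2 * K) → ℝ, (∀ i, 0 ≤ w i) → w ≤ w2 →
      ∀ l, rateF V v σ2 W0 B d p' w l ≤ rateF V v σ2 W0 B d p' w2 l) ∧
    (∀ α : ℝ, 1 < α → ∀ w : Fin (2 * K) → ℝ, (∀ i, 0 ≤ w i) →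
      ∀ l, rateF V v σ2 W0 B d p' (α • w) l < α * rateF V v σ2 W0 B d p' w l) := by
  have hSnn : ∀ (w : Fin (2*K) → ℝ), (∀ i, 0 ≤ w i) → ∀ l,
      0 ≤ ∑ j, V l j * (p' j * w j) := by
    intro w hw l
    exact Finset.sum_nonneg fun j _ => mul_nonneg (hV l j)
      (mul_nonneg (hp' j).le (hw j))
  have hIpos : ∀ (w : Fin (2*K) → ℝ), (∀ i, 0 ≤ w i) → ∀ l,
      0 < interf V v σ2 p' w l := by
    intro w hw l
    exact div_pos (by linarith [hSnn w hw l]) (hv l)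
  have hSINRpos : ∀ (w : Fin (2*K) → ℝ), (∀ i, 0 ≤ w i) → ∀ l,
      0 < p' l / interf V v σ2 p' w l := fun w hw l => div_pos (hp' l) (hIpos w hw l)
  have hLpos : ∀ (w : Fin (2*K) → ℝ), (∀ i, 0 ≤ w i) → ∀ l,
      0 < Real.logb 2 (1 + p' l / interf V v σ2 p' w l) := by
    intro w hw l
    exact Real.logb_pos one_lt_two (by linarith [hSINRpos w hw l])
  refine ⟨?_, ?_, ?_⟩
  · intro w hw l
    exact div_pos (hd l) (mul_pos (mul_pos hW0 hB) (hLpos w hw l))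
  · intro w w2 hw hle l
    have hw2 : ∀ i, 0 ≤ w2 i := fun i => le_trans (hw i) (hle i)
    have hS : ∑ j, V l j * (p' j * w j) ≤ ∑ j, V l j * (p' j * w2 j) := by
      refine Finset.sum_le_sum fun j _ => ?_
      exact mul_le_mul_of_nonneg_left
        (mul_le_mul_of_nonneg_left (hle j) (hp' j).le) (hV l j)
    have hI : interf V v σ2 p' w l ≤ interf V v σ2 p' w2 l := by
      unfold interf
      exact (div_le_div_iff_of_pos_right (hv l)).mpr (by linarith)
    have hSINR : p' l / interf V v σ2 p' w2 l ≤ p' l / interf V v σ2 p' w l :=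
      div_le_div_of_nonneg_left (hp' l).le (hIpos w hw l) hI
    have hL : Real.logb 2 (1 + p' l / interf V v σ2 p' w2 l)
        ≤ Real.logb 2 (1 + p' l / interf V v σ2 p' w l) := by
      apply Real.logb_le_logb_of_le one_lt_two
        (by linarith [hSINRpos w2 hw2 l]) (by linarith)
    unfold rateF
    apply div_le_div_of_nonneg_left (hd l).le
      (mul_pos (mul_pos hW0 hB) (hLpos w2 hw2 l))
    exact mul_le_mul_of_nonneg_left hL (mul_pos hW0 hB).le
  · intro α hα w hw l
    have hα0 : 0 < α := lt_trans one_pos hα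
    have hwα : ∀ i, 0 ≤ (α • w) i := fun i => by
      simpa using mul_nonneg hα0.le (hw i)
    set S := ∑ j, V l j * (p' j * w j) with hS
    have hSα : (∑ j, V l j * (p' j * (α • w) j)) = α * S := by
      rw [hS, Finset.mul_sum]
      refine Finset.sum_congr rfl fun j _ => ?_
      simp [Pi.smul_apply, smul_eq_mul]; ring
    have hIα : interf V v σ2 p' (α • w) l < α * interf V v σ2 p' w l := by
      unfold interf
      rw [hSα, ← hS, ← mul_div_assoc]
      exact (div_lt_div_iff_of_pos_right (hv l)).mpr (by nlinarith)
    have hIαpos := hIpos (α • w) hwα l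
    have hIwpos := hIpos w hw l
    have hSINRα : p' l / interf V v σ2 p' w l / α
        < p' l / interf V v σ2 p' (α • w) l := by
      rw [div_div]
      exact div_lt_div_of_pos_left (hp' l) hIαpos (by linarith [hIα])
    set s := p' l / interf V v σ2 p' w l with hsdef
    have hs0 : 0 < s := hSINRpos w hw l
    have hlog : Real.logb 2 (1 + s) ≤ α * Real.logb 2 (1 + s / α) := by
      rw [Real.logb, Real.logb, ← mul_div_assoc]
      exact (div_le_div_iff_of_pos_right (Real.log_pos one_lt_two)).mpr
        (log_scale hα hs0.le)
    have hlog2 : Real.logb 2 (1 + s / α)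
        < Real.logb 2 (1 + p' l / interf V v σ2 p' (α • w) l) := by
      apply Real.logb_lt_logb one_lt_two (by positivity)
      linarith [hSINRα]
    have hLα := hLpos (α • w) hwα l
    have hkey : Real.logb 2 (1 + s) / α
        < Real.logb 2 (1 + p' l / interf V v σ2 p' (α • w) l) := by
      rw [div_lt_iff₀ hα0]
      nlinarith
    unfold rateF
    rw [show α * (d l / (W0 * B * Real.logb 2 (1 + s)))
        = d l / (W0 * B * (Real.logb 2 (1 + s) / α)) by
      field_simp]
    apply div_lt_div_of_pos_left (hd l)
      (mul_pos (mul_pos hW0 hB) (div_pos (hLpos w hw l) hα0))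
    exact mul_lt_mul_of_pos_left hkey (mul_pos hW0 hB)
end

section
/- Fix p' ∈ ℝ₊₊^{2K} and let g_{p'}(w) := max{g₁(w), g_{2,p'}(w)}. Let w' ∈ ℝ₊₊^{2K} be the unique vector satisfying w' = λ'·f_{p'}(w') with g_{p'}(w') = 1, where λ' := 1/g_{p'}(f_{p'}(w')). Then λ' is the maximum feasible utility: there exist no λ'' > λ' and w'' ∈ ℝ₊^{2K} satisfying both w'' ≥ λ''·f_{p'}(w'') componentwise and g_{p'}(w'') ≤ 1. -/
/-- Load constraint `g₁(w) = ‖A w‖_∞`, where the 0/1 association matrix `A` with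
exactly one 1 per column is encoded by the assignment map `asg` (link `l` is
associated to cell `asg l`). -/
noncomputable def gOne {K N : ℕ} (asg : Fin (2 * K) → Fin N) (w : Fin (2 * K) → ℝ) : ℝ :=
  ⨆ n : Fin N, ∑ l, if asg l = n then w l else 0

/-- Power constraint `g₂(w, p) = W₀ · max_j (A^{ext} diag(w) p)_j / p^{max}_j`, with
the 0/1 matrix `A^{ext}` (one 1 per column) encoded by the assignment map `aext`. -/
noncomputable def gTwo {K N : ℕ} (aext : Fin (2 * K) → Fin (K + N))
    (pmax : Fin (K + N) → ℝ) (W0 : ℝ) (w p : Fin (2 * K) → ℝ) : ℝ :=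
  W0 * ⨆ j : Fin (K + N), (∑ l, if aext l = j then w l * p l else 0) / pmax j

variable {K : ℕ} {V : Matrix (Fin (2*K)) (Fin (2*K)) ℝ} {v : Fin (2*K) → ℝ} {σ2 W0 B : ℝ}
  {d p : Fin (2*K) → ℝ}

lemma interf_pos' (hV : ∀ i j, 0 ≤ V i j) (hv : ∀ i, 0 < v i) (hσ2 : 0 < σ2)
    (hp : ∀ i, 0 < p i) {w : Fin (2*K) → ℝ} (hw : ∀ i, 0 ≤ w i) (l : Fin (2*K)) :
    0 < interf V v σ2 p w l := by
  apply div_pos _ (hv l)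
  have : 0 ≤ ∑ j, V l j * (p j * w j) :=
    Finset.sum_nonneg fun j _ => mul_nonneg (hV l j) (mul_nonneg (hp j).le (hw j))
  linarith

lemma logb_pos' (hV : ∀ i j, 0 ≤ V i j) (hv : ∀ i, 0 < v i) (hσ2 : 0 < σ2)
    (hp : ∀ i, 0 < p i) {w : Fin (2*K) → ℝ} (hw : ∀ i, 0 ≤ w i) (l : Fin (2*K)) :
    0 < Real.logb 2 (1 + p l / interf V v σ2 p w l) := by
  have hI := interf_pos' hV hv hσ2 hp hw l
  have hs : 0 < p l / interf V v σ2 p w l := div_pos (hp l) hI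
  exact Real.logb_pos one_lt_two (by linarith)

lemma rateF_pos' (hV : ∀ i j, 0 ≤ V i j) (hv : ∀ i, 0 < v i) (hσ2 : 0 < σ2)
    (hW0 : 0 < W0) (hB : 0 < B) (hd : ∀ i, 0 < d i)
    (hp : ∀ i, 0 < p i) {w : Fin (2*K) → ℝ} (hw : ∀ i, 0 ≤ w i) (l : Fin (2*K)) :
    0 < rateF V v σ2 W0 B d p w l := by
  have hlog := logb_pos' hV hv hσ2 hp hw l
  exact div_pos (hd l) (by positivity)

lemma rateF_mono' (hV : ∀ i j, 0 ≤ V i j) (hv : ∀ i, 0 < v i) (hσ2 : 0 < σ2)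
    (hW0 : 0 < W0) (hB : 0 < B) (hd : ∀ i, 0 < d i) (hp : ∀ i, 0 < p i)
    {w1 w2 : Fin (2*K) → ℝ} (hw1 : ∀ i, 0 ≤ w1 i) (hle : ∀ i, w1 i ≤ w2 i) (l : Fin (2*K)) :
    rateF V v σ2 W0 B d p w1 l ≤ rateF V v σ2 W0 B d p w2 l := by
  have hw2 : ∀ i, 0 ≤ w2 i := fun i => (hw1 i).trans (hle i)
  have hI1 := interf_pos' hV hv hσ2 hp hw1 l
  have hI2 := interf_pos' hV hv hσ2 hp hw2 l
  have hII : interf V v σ2 p w1 l ≤ interf V v σ2 p w2 l := by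
    unfold interf
    gcongr (?_ + σ2) / v l
    · exact (hv l).le
    · exact Finset.sum_le_sum fun j _ =>
        mul_le_mul_of_nonneg_left (mul_le_mul_of_nonneg_left (hle j) (hp j).le) (hV l j)
  have hs : p l / interf V v σ2 p w2 l ≤ p l / interf V v σ2 p w1 l :=
    div_le_div_of_nonneg_left (hp l).le hI1 hII
  have hL2 := logb_pos' hV hv hσ2 hp hw2 l
  have hL1 := logb_pos' hV hv hσ2 hp hw1 l
  have hlog : Real.logb 2 (1 + p l / interf V v σ2 p w2 l)
      ≤ Real.logb 2 (1 + p l / interf V v σ2 p w1 l) := by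
    apply Real.logb_le_logb_of_le one_lt_two ?_ (by linarith)
    have := div_pos (hp l) hI2
    linarith
  unfold rateF
  have h1 : 0 < W0 * B * Real.logb 2 (1 + p l / interf V v σ2 p w2 l) := by positivity
  apply div_le_div_of_nonneg_left (hd l).le h1
  have : 0 ≤ W0 * B := by positivity
  nlinarith

lemma rateF_scale' (hV : ∀ i j, 0 ≤ V i j) (hv : ∀ i, 0 < v i) (hσ2 : 0 < σ2)
    (hW0 : 0 < W0) (hB : 0 < B) (hd : ∀ i, 0 < d i) (hp : ∀ i, 0 < p i)
    {t : ℝ} (ht : 1 ≤ t) {w : Fin (2*K) → ℝ} (hw : ∀ i, 0 ≤ w i) (l : Fin (2*K)) :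
    rateF V v σ2 W0 B d p (fun i => t * w i) l ≤ t * rateF V v σ2 W0 B d p w l := by
  have ht0 : 0 < t := lt_of_lt_of_le one_pos ht
  have hwt : ∀ i, 0 ≤ t * w i := fun i => mul_nonneg ht0.le (hw i)
  have hI := interf_pos' hV hv hσ2 hp hw l
  have hIt := interf_pos' hV hv hσ2 hp hwt l
  set x : ℝ := p l / interf V v σ2 p w l with hxdef
  have hx : 0 < x := div_pos (hp l) hI
  -- interf (t•w) ≤ t * interf w
  have hItle : interf V v σ2 p (fun i => t * w i) l ≤ t * interf V v σ2 p w l := by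
    unfold interf
    rw [← mul_div_assoc]
    apply (div_le_div_iff_of_pos_right (hv l)).mpr
    have hS : 0 ≤ ∑ j, V l j * (p j * w j) :=
      Finset.sum_nonneg fun j _ => mul_nonneg (hV l j) (mul_nonneg (hp j).le (hw j))
    have hsum : (∑ j, V l j * (p j * (t * w j))) = t * ∑ j, V l j * (p j * w j) := by
      rw [Finset.mul_sum]; exact Finset.sum_congr rfl fun j _ => by ring
    rw [hsum]; nlinarith
  -- SINR lower bound
  have hsinr : x / t ≤ p l / interf V v σ2 p (fun i => t * w i) l := by
    rw [hxdef, div_div]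
    exact div_le_div_of_nonneg_left (hp l).le hIt (by linarith)
  -- Bernoulli
  have hbern : 1 + x ≤ (1 + x / t) ^ t := by
    have hxt' : 0 < x / t := div_pos hx ht0
    have := one_add_mul_self_le_rpow_one_add (s := x / t)
      (by linarith) ht
    rwa [mul_div_cancel₀ _ (ne_of_gt ht0)] at this
  have hxt : 0 < 1 + x / t := by have := div_pos hx ht0; linarith
  have hlogb : Real.logb 2 (1 + x) ≤ t * Real.logb 2 (1 + x / t) := by
    calc Real.logb 2 (1 + x) ≤ Real.logb 2 ((1 + x / t) ^ t) :=
          Real.logb_le_logb_of_le one_lt_two (by linarith) hbern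
      _ = t * Real.logb 2 (1 + x / t) := Real.logb_rpow_eq_mul_logb_of_pos hxt
  have hmono : Real.logb 2 (1 + x / t)
      ≤ Real.logb 2 (1 + p l / interf V v σ2 p (fun i => t * w i) l) :=
    Real.logb_le_logb_of_le one_lt_two hxt (by linarith)
  have hLt : 0 < Real.logb 2 (1 + p l / interf V v σ2 p (fun i => t * w i) l) :=
    logb_pos' hV hv hσ2 hp hwt l
  have hL : 0 < Real.logb 2 (1 + x) := Real.logb_pos one_lt_two (by linarith)
  -- conclude
  unfold rateF
  rw [← hxdef]
  have hkey : (W0 * B * Real.logb 2 (1 + x)) / t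
      ≤ W0 * B * Real.logb 2 (1 + p l / interf V v σ2 p (fun i => t * w i) l) := by
    rw [div_le_iff₀ ht0]
    calc W0 * B * Real.logb 2 (1 + x) ≤ W0 * B * (t * Real.logb 2 (1 + x / t)) :=
          mul_le_mul_of_nonneg_left hlogb (by positivity)
      _ = (W0 * B * Real.logb 2 (1 + x / t)) * t := by ring
      _ ≤ (W0 * B * Real.logb 2 (1 + p l / interf V v σ2 p (fun i => t * w i) l)) * t :=
          mul_le_mul_of_nonneg_right
            (mul_le_mul_of_nonneg_left hmono (by positivity)) ht0.le
  have hrw : t * (d l / (W0 * B * Real.logb 2 (1 + x)))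
      = d l / ((W0 * B * Real.logb 2 (1 + x)) / t) := by
    rw [div_div_eq_mul_div]; ring
  rw [hrw]
  exact div_le_div_of_nonneg_left (hd l).le (by positivity) hkey

/-- Proposition 1, optimality part: the normalized fixed point `w'`
of `f_{p'}` attains the maximum feasible utility: no `λ'' > λ'` admits a nonnegative
`w''` with `w'' ≥ λ''·f_{p'}(w'')` and `g_{p'}(w'') ≤ 1`. -/
theorem bandwidth_fixed_point_optimal (K N : ℕ) (hK : 1 ≤ K) (hN : 1 ≤ N)
    (V : Matrix (Fin (2 * K)) (Fin (2 * K)) ℝ) (hV : ∀ i j, 0 ≤ V i j)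
    (v : Fin (2 * K) → ℝ) (hv : ∀ i, 0 < v i)
    (σ2 : ℝ) (hσ2 : 0 < σ2) (W0 B : ℝ) (hW0 : 0 < W0) (hB : 0 < B)
    (d : Fin (2 * K) → ℝ) (hd : ∀ i, 0 < d i)
    (asg : Fin (2 * K) → Fin N) (aext : Fin (2 * K) → Fin (K + N))
    (pmax : Fin (K + N) → ℝ) (hpmax : ∀ j, 0 < pmax j)
    (p' : Fin (2 * K) → ℝ) (hp' : ∀ i, 0 < p' i)
    (w' : Fin (2 * K) → ℝ) (hw' : ∀ i, 0 < w' i) (lam' : ℝ)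
    (hlam' : lam' = 1 / max (gOne asg (fun l => rateF V v σ2 W0 B d p' w' l))
      (gTwo aext pmax W0 (fun l => rateF V v σ2 W0 B d p' w' l) p'))
    (hfix : ∀ l, w' l = lam' * rateF V v σ2 W0 B d p' w' l)
    (hunit : max (gOne asg w') (gTwo aext pmax W0 w' p') = 1) :
    ¬ ∃ lam'' : ℝ, lam' < lam'' ∧ ∃ w'' : Fin (2 * K) → ℝ,
      (∀ i, 0 ≤ w'' i) ∧
      (∀ l, lam'' * rateF V v σ2 W0 B d p' w'' l ≤ w'' l) ∧
      max (gOne asg w'') (gTwo aext pmax W0 w'' p') ≤ 1 := by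
  rintro ⟨lam'', hlt, w'', hw''0, hfeas, hcon⟩
  have h2K : 0 < 2 * K := by omega
  haveI : Nonempty (Fin N) := ⟨⟨0, hN⟩⟩
  haveI : Nonempty (Fin (K + N)) := ⟨⟨0, by omega⟩⟩
  set l0 : Fin (2 * K) := ⟨0, h2K⟩ with hl0
  have hw'0 : ∀ i, 0 ≤ w' i := fun i => (hw' i).le
  have hFpos : ∀ l, 0 < rateF V v σ2 W0 B d p' w' l :=
    fun l => rateF_pos' hV hv hσ2 hW0 hB hd hp' hw'0 l
  have hbdd1 : ∀ u : Fin (2 * K) → ℝ,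
      BddAbove (Set.range fun n : Fin N => ∑ l, if asg l = n then u l else 0) :=
    fun u => Set.Finite.bddAbove (Set.finite_range _)
  have hbdd2 : ∀ u : Fin (2 * K) → ℝ,
      BddAbove (Set.range fun j : Fin (K + N) =>
        (∑ l, if aext l = j then u l * p' l else 0) / pmax j) :=
    fun u => Set.Finite.bddAbove (Set.finite_range _)
  -- lam' > 0
  have hgF : 0 < gOne asg (fun l => rateF V v σ2 W0 B d p' w' l) := by
    have h1 : rateF V v σ2 W0 B d p' w' l0
        ≤ ∑ l, if asg l = asg l0 then rateF V v σ2 W0 B d p' w' l else 0 := by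
      have := Finset.single_le_sum
        (f := fun l => if asg l = asg l0 then rateF V v σ2 W0 B d p' w' l else 0)
        (fun i _ => by split
                       · exact (hFpos i).le
                       · exact le_rfl) (Finset.mem_univ l0)
      simpa using this
    exact lt_of_lt_of_le (hFpos l0) (h1.trans (le_ciSup (hbdd1 _) (asg l0)))
  have hlam'pos : 0 < lam' := by
    rw [hlam']
    exact one_div_pos.mpr (lt_of_lt_of_le hgF (le_max_left _ _))
  have hlam''pos : 0 < lam'' := lt_trans hlam'pos hlt
  have hw''pos : ∀ l, 0 < w'' l := fun l =>
    lt_of_lt_of_le (mul_pos hlam''pos (rateF_pos' hV hv hσ2 hW0 hB hd hp' hw''0 l)) (hfeas l)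
  -- the maximizing index
  obtain ⟨l₁, -, hmax⟩ := Finset.exists_max_image Finset.univ
    (fun l => w' l / w'' l) ⟨l0, Finset.mem_univ _⟩
  set t : ℝ := w' l₁ / w'' l₁ with htdef
  have ht0 : 0 < t := div_pos (hw' l₁) (hw''pos l₁)
  have hle : ∀ l, w' l ≤ t * w'' l := fun l =>
    (div_le_iff₀ (hw''pos l)).mp (hmax l (Finset.mem_univ l))
  -- t ≥ 1 from the constraints
  have hg1 : gOne asg w' ≤ t := by
    unfold gOne
    apply ciSup_le
    intro n
    calc (∑ l, if asg l = n then w' l else 0)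
        ≤ ∑ l, if asg l = n then t * w'' l else 0 :=
          Finset.sum_le_sum fun l _ => by split
                                          · exact hle l
                                          · exact le_rfl
      _ = t * ∑ l, if asg l = n then w'' l else 0 := by
          rw [Finset.mul_sum]
          exact Finset.sum_congr rfl fun l _ => by split <;> simp
      _ ≤ t * gOne asg w'' := mul_le_mul_of_nonneg_left (le_ciSup (hbdd1 w'') n) ht0.le
      _ ≤ t * 1 := mul_le_mul_of_nonneg_left ((le_max_left _ _).trans hcon) ht0.le
      _ = t := mul_one t
  have hg2 : gTwo aext pmax W0 w' p' ≤ t := by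
    unfold gTwo
    have hsup : (⨆ j : Fin (K + N), (∑ l, if aext l = j then w' l * p' l else 0) / pmax j)
        ≤ t * ⨆ j : Fin (K + N), (∑ l, if aext l = j then w'' l * p' l else 0) / pmax j := by
      apply ciSup_le
      intro j
      calc (∑ l, if aext l = j then w' l * p' l else 0) / pmax j
          ≤ (∑ l, if aext l = j then t * (w'' l * p' l) else 0) / pmax j := by
            apply (div_le_div_iff_of_pos_right (hpmax j)).mpr
            refine Finset.sum_le_sum fun l _ => ?_
            split
            · calc w' l * p' l ≤ (t * w'' l) * p' l :=
                    mul_le_mul_of_nonneg_right (hle l) (hp' l).le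
                _ = t * (w'' l * p' l) := by ring
            · exact le_rfl
        _ = t * ((∑ l, if aext l = j then w'' l * p' l else 0) / pmax j) := by
            rw [← mul_div_assoc, Finset.mul_sum]
            congr 1
            exact Finset.sum_congr rfl fun l _ => by split <;> simp
        _ ≤ t * ⨆ j : Fin (K + N),
              (∑ l, if aext l = j then w'' l * p' l else 0) / pmax j :=
            mul_le_mul_of_nonneg_left (le_ciSup (hbdd2 w'') j) ht0.le
    calc W0 * (⨆ j : Fin (K + N), (∑ l, if aext l = j then w' l * p' l else 0) / pmax j)
        ≤ W0 * (t * ⨆ j : Fin (K + N),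
            (∑ l, if aext l = j then w'' l * p' l else 0) / pmax j) :=
          mul_le_mul_of_nonneg_left hsup hW0.le
      _ = t * gTwo aext pmax W0 w'' p' := by unfold gTwo; ring
      _ ≤ t * 1 := mul_le_mul_of_nonneg_left ((le_max_right _ _).trans hcon) ht0.le
      _ = t := mul_one t
  have ht1 : 1 ≤ t := by
    calc (1 : ℝ) = max (gOne asg w') (gTwo aext pmax W0 w' p') := hunit.symm
      _ ≤ t := max_le hg1 hg2
  -- final contradiction at l₁
  have hF'' : 0 < rateF V v σ2 W0 B d p' w'' l₁ :=
    rateF_pos' hV hv hσ2 hW0 hB hd hp' hw''0 l₁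
  have step1 : w' l₁ ≤ lam' * rateF V v σ2 W0 B d p' (fun i => t * w'' i) l₁ := by
    rw [hfix l₁]
    exact mul_le_mul_of_nonneg_left
      (rateF_mono' hV hv hσ2 hW0 hB hd hp' hw'0 hle l₁) hlam'pos.le
  have step2 : rateF V v σ2 W0 B d p' (fun i => t * w'' i) l₁
      ≤ t * rateF V v σ2 W0 B d p' w'' l₁ :=
    rateF_scale' hV hv hσ2 hW0 hB hd hp' ht1 hw''0 l₁
  have step2' : lam' * rateF V v σ2 W0 B d p' (fun i => t * w'' i) l₁
      ≤ lam' * (t * rateF V v σ2 W0 B d p' w'' l₁) :=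
    mul_le_mul_of_nonneg_left step2 hlam'pos.le
  have step3 : lam' * (t * rateF V v σ2 W0 B d p' w'' l₁)
      < lam'' * (t * rateF V v σ2 W0 B d p' w'' l₁) :=
    mul_lt_mul_of_pos_right hlt (mul_pos ht0 hF'')
  have step5 : t * (lam'' * rateF V v σ2 W0 B d p' w'' l₁) ≤ t * w'' l₁ :=
    mul_le_mul_of_nonneg_left (hfeas l₁) ht0.le
  have heq : t * w'' l₁ = w' l₁ := by
    rw [htdef, div_mul_cancel₀ _ (hw''pos l₁).ne']
  nlinarith [step1, step2', step3, step5, heq]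
end

section
/- Let f : ℝ₊ᵏ → ℝ₊₊ᵏ be a standard interference function. Then for every p ∈ ℝ₊₊ᵏ and every α > 1, min_{l=1,…,k} (α·p_l)/f_l(α·p) > min_{l=1,…,k} p_l/f_l(p). -/
/-- For a standard interference function `f`, every positive `p`, and
every `α > 1`, `min_l (α·p_l)/f_l(α·p) > min_l p_l/f_l(p)`. -/
theorem sif_min_ratio_strict_mono (k : ℕ) (hk : 0 < k)
    (f : (Fin k → ℝ) → (Fin k → ℝ))
    (hpos : ∀ x : Fin k → ℝ, (∀ i, 0 ≤ x i) → ∀ i, 0 < f x i)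
    (hmono : ∀ x y : Fin k → ℝ, (∀ i, 0 ≤ x i) → x ≤ y → f x ≤ f y)
    (hscale : ∀ α : ℝ, 1 < α → ∀ x : Fin k → ℝ, (∀ i, 0 ≤ x i) →
      ∀ i, f (α • x) i < α * f x i) :
    ∀ p : Fin k → ℝ, (∀ i, 0 < p i) → ∀ α : ℝ, 1 < α →
      (⨅ l, p l / f p l) < ⨅ l, (α * p l) / f (α • p) l := by
  intro p hp α hα
  haveI : Nonempty (Fin k) := ⟨⟨0, hk⟩⟩
  have hp0 : ∀ i, 0 ≤ p i := fun i => (hp i).le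
  have hfp : ∀ i, 0 < f p i := hpos p hp0
  have hfαp : ∀ i, 0 < f (α • p) i :=
    hpos (α • p) (fun i => by
      have : (0:ℝ) ≤ α := le_of_lt (lt_trans one_pos hα)
      exact mul_nonneg this (hp0 i))
  obtain ⟨l0, hl0⟩ := exists_eq_ciInf_of_finite (f := fun l => (α * p l) / f (α • p) l)
  rw [← hl0]
  have key : p l0 / f p l0 < (α * p l0) / f (α • p) l0 := by
    have hlt : f (α • p) l0 < α * f p l0 := hscale α hα p hp0 l0
    rw [div_lt_div_iff₀ (hfp l0) (hfαp l0)]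
    calc p l0 * f (α • p) l0 < p l0 * (α * f p l0) := by
          exact mul_lt_mul_of_pos_left hlt (hp l0)
      _ = α * p l0 * f p l0 := by ring
  refine lt_of_le_of_lt ?_ key
  exact ciInf_le (Finite.bddBelow_range _) l0
end

section
/- Fix p' ∈ ℝ₊₊^{2K}, let w' ∈ ℝ₊₊^{2K} be the unique vector satisfying w' = λ'·f_{p'}(w') with max{g₁(w'), g_{2,p'}(w')} = 1 and λ' := 1/max{g₁(f_{p'}(w')), g_{2,p'}(f_{p'}(w'))}, and let p'' ∈ ℝ₊₊^{2K} be the unique vector satisfying p'' = λ''·f'_{w'}(p'') with g_{2,w'}(p'') = 1 and λ'' := 1/g_{2,w'}(f'_{w'}(p'')). Then: (i) if g_{2,p'}(w') = 1, then λ'' = λ' and p'' = p'; (ii) if g_{2,p'}(w') < 1, then λ'' > λ'. -/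
/-- Interference at link `l` for a fixed bandwidth vector `w'`:
`I_l(p) = ((Ṽ · diag(w') · p)_l + σ²) / v_l`. -/
noncomputable def interfW {K : ℕ} (V : Matrix (Fin (2 * K)) (Fin (2 * K)) ℝ)
    (v : Fin (2 * K) → ℝ) (σ2 : ℝ) (w' p : Fin (2 * K) → ℝ) (l : Fin (2 * K)) : ℝ :=
  ((∑ j, V l j * (w' j * p j)) + σ2) / v l

/-- The function `f'_{w'}` of the paper, defined componentwise by
`(p_l / w'_l) · d_l / (W₀ B log₂(1 + p_l / I_l(p)))` when `p_l ≠ 0`, and by the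
continuous extension `(d_l ln 2 / (W₀ B w'_l)) · I_l(p)` when `p_l = 0`. -/
noncomputable def fPrimeW {K : ℕ} (V : Matrix (Fin (2 * K)) (Fin (2 * K)) ℝ)
    (v : Fin (2 * K) → ℝ) (σ2 W0 B : ℝ) (d : Fin (2 * K) → ℝ)
    (w' p : Fin (2 * K) → ℝ) (l : Fin (2 * K)) : ℝ :=
  if p l = 0 then
    d l * Real.log 2 / (W0 * B * w' l) * interfW V v σ2 w' p l
  else
    p l / w' l * (d l / (W0 * B * Real.logb 2 (1 + p l / interfW V v σ2 w' p l)))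

namespace PowerAux

variable {K N : ℕ}

lemma interfW_pos (V : Matrix (Fin (2 * K)) (Fin (2 * K)) ℝ) (hV : ∀ i j, 0 ≤ V i j)
    (v : Fin (2 * K) → ℝ) (hv : ∀ i, 0 < v i) (σ2 : ℝ) (hσ2 : 0 < σ2)
    (w p : Fin (2 * K) → ℝ) (hw : ∀ i, 0 ≤ w i) (hp : ∀ i, 0 ≤ p i) (l : Fin (2 * K)) :
    0 < interfW V v σ2 w p l := by
  apply div_pos _ (hv l)
  have h : 0 ≤ ∑ j, V l j * (w j * p j) :=
    Finset.sum_nonneg fun j _ => mul_nonneg (hV l j) (mul_nonneg (hw j) (hp j))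
  linarith

lemma interfW_mono (V : Matrix (Fin (2 * K)) (Fin (2 * K)) ℝ) (hV : ∀ i j, 0 ≤ V i j)
    (v : Fin (2 * K) → ℝ) (hv : ∀ i, 0 < v i) (σ2 : ℝ)
    (w p q : Fin (2 * K) → ℝ) (hw : ∀ i, 0 ≤ w i) (hpq : ∀ i, p i ≤ q i) (l : Fin (2 * K)) :
    interfW V v σ2 w p l ≤ interfW V v σ2 w q l := by
  unfold interfW
  apply div_le_div_of_nonneg_right _ (hv l).le
  have h : ∑ j, V l j * (w j * p j) ≤ ∑ j, V l j * (w j * q j) :=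
    Finset.sum_le_sum fun j _ =>
      mul_le_mul_of_nonneg_left (mul_le_mul_of_nonneg_left (hpq j) (hw j)) (hV l j)
  linarith

lemma fPrimeW_pos (V : Matrix (Fin (2 * K)) (Fin (2 * K)) ℝ) (hV : ∀ i j, 0 ≤ V i j)
    (v : Fin (2 * K) → ℝ) (hv : ∀ i, 0 < v i) (σ2 : ℝ) (hσ2 : 0 < σ2)
    (W0 B : ℝ) (hW0 : 0 < W0) (hB : 0 < B) (d : Fin (2 * K) → ℝ) (hd : ∀ i, 0 < d i)
    (w' p : Fin (2 * K) → ℝ) (hw' : ∀ i, 0 < w' i) (hp : ∀ i, 0 < p i) (l : Fin (2 * K)) :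
    0 < fPrimeW V v σ2 W0 B d w' p l := by
  rw [fPrimeW, if_neg (hp l).ne']
  have hI := interfW_pos V hV v hv σ2 hσ2 w' p (fun i => (hw' i).le) (fun i => (hp i).le) l
  have hlog : 0 < Real.logb 2 (1 + p l / interfW V v σ2 w' p l) := by
    apply Real.logb_pos one_lt_two
    have := div_pos (hp l) hI
    linarith
  exact mul_pos (div_pos (hp l) (hw' l)) (div_pos (hd l) (by positivity))

/-- The key comparison lemma: if `q` and `r` are positive fixed points of
`μ⁻¹ • fPrimeW` resp. `ν⁻¹ • fPrimeW`, and `r ≤ t • q` with equality at `l`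
for some `t ≥ 1`, then `μ ≤ ν`, strictly if `t > 1`. -/
lemma key (V : Matrix (Fin (2 * K)) (Fin (2 * K)) ℝ) (hV : ∀ i j, 0 ≤ V i j)
    (v : Fin (2 * K) → ℝ) (hv : ∀ i, 0 < v i) (σ2 : ℝ) (hσ2 : 0 < σ2)
    (W0 B : ℝ) (hW0 : 0 < W0) (hB : 0 < B) (d : Fin (2 * K) → ℝ) (hd : ∀ i, 0 < d i)
    (w' : Fin (2 * K) → ℝ) (hw' : ∀ i, 0 < w' i)
    (q r : Fin (2 * K) → ℝ) (hq : ∀ i, 0 < q i) (hr : ∀ i, 0 < r i)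
    (μ ν t : ℝ)
    (hfq : ∀ l, q l = μ * fPrimeW V v σ2 W0 B d w' q l)
    (hfr : ∀ l, r l = ν * fPrimeW V v σ2 W0 B d w' r l)
    (ht : 1 ≤ t) (l : Fin (2 * K))
    (hle : ∀ j, r j ≤ t * q j) (heqt : r l = t * q l) :
    μ ≤ ν ∧ (1 < t → μ < ν) := by
  have ht0 : 0 < t := lt_of_lt_of_le one_pos ht
  have hfqpos := fPrimeW_pos V hV v hv σ2 hσ2 W0 B hW0 hB d hd w' q hw' hq l
  have hfrpos := fPrimeW_pos V hV v hv σ2 hσ2 W0 B hW0 hB d hd w' r hw' hr l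
  have hμ : 0 < μ := by nlinarith [hfq l, hq l, hfqpos]
  have hν : 0 < ν := by nlinarith [hfr l, hr l, hfrpos]
  set Iq := interfW V v σ2 w' q l with hIqdef
  set Ir := interfW V v σ2 w' r l with hIrdef
  have hIqpos : 0 < Iq :=
    interfW_pos V hV v hv σ2 hσ2 w' q (fun i => (hw' i).le) (fun i => (hq i).le) l
  have hIrpos : 0 < Ir :=
    interfW_pos V hV v hv σ2 hσ2 w' r (fun i => (hw' i).le) (fun i => (hr i).le) l
  -- comparison of interferences
  have hIscale : Ir ≤ (t * (∑ j, V l j * (w' j * q j)) + σ2) / v l := by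
    have h1 : Ir ≤ interfW V v σ2 w' (fun j => t * q j) l :=
      interfW_mono V hV v hv σ2 w' r (fun j => t * q j) (fun i => (hw' i).le) hle l
    have h2 : interfW V v σ2 w' (fun j => t * q j) l
        = (t * (∑ j, V l j * (w' j * q j)) + σ2) / v l := by
      unfold interfW
      congr 1
      rw [Finset.mul_sum]
      exact congrArg₂ _ (Finset.sum_congr rfl fun j _ => by ring) rfl
    linarith [h1, h2.le, h2.ge]
  have hSnn : 0 ≤ ∑ j, V l j * (w' j * q j) :=
    Finset.sum_nonneg fun j _ => mul_nonneg (hV l j) (mul_nonneg (hw' j).le (hq j).le)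
  have htIq : t * Iq = (t * (∑ j, V l j * (w' j * q j)) + t * σ2) / v l := by
    rw [hIqdef]; unfold interfW; field_simp
  have hIr_le : Ir ≤ t * Iq := by
    rw [htIq]
    refine le_trans hIscale (div_le_div_of_nonneg_right ?_ (hv l).le)
    nlinarith
  have hIr_lt : 1 < t → Ir < t * Iq := by
    intro h1t
    rw [htIq]
    refine lt_of_le_of_lt hIscale (div_lt_div_of_pos_right ?_ (hv l))
    nlinarith
  -- comparison of SINRs
  have hsinr_le : q l / Iq ≤ r l / Ir := by
    have h1 : r l / (t * Iq) ≤ r l / Ir :=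
      div_le_div_of_nonneg_left (hr l).le hIrpos hIr_le
    have h2 : r l / (t * Iq) = q l / Iq := by
      rw [heqt, mul_div_mul_left _ _ ht0.ne']
    linarith
  have hsinr_lt : 1 < t → q l / Iq < r l / Ir := by
    intro h1t
    have h1 : r l / (t * Iq) < r l / Ir :=
      div_lt_div_of_pos_left (hr l) hIrpos (hIr_lt h1t)
    have h2 : r l / (t * Iq) = q l / Iq := by
      rw [heqt, mul_div_mul_left _ _ ht0.ne']
    linarith
  -- comparison of logs
  set Lq := Real.logb 2 (1 + q l / Iq) with hLqdef
  set Lr := Real.logb 2 (1 + r l / Ir) with hLrdef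
  have hxq : (0:ℝ) < 1 + q l / Iq := by have := div_pos (hq l) hIqpos; linarith
  have hLqpos : 0 < Lq := Real.logb_pos one_lt_two (by
    have := div_pos (hq l) hIqpos; linarith)
  have hLrpos : 0 < Lr := Real.logb_pos one_lt_two (by
    have := div_pos (hr l) hIrpos; linarith)
  have hL_le : Lq ≤ Lr := Real.logb_le_logb_of_le one_lt_two hxq (by linarith)
  have hL_lt : 1 < t → Lq < Lr := fun h1t =>
    Real.logb_lt_logb one_lt_two hxq (by linarith [hsinr_lt h1t])
  -- the values of fPrimeW
  have hfqval : fPrimeW V v σ2 W0 B d w' q l = q l / w' l * (d l / (W0 * B * Lq)) := by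
    rw [fPrimeW, if_neg (hq l).ne']
  have hfrval : fPrimeW V v σ2 W0 B d w' r l = r l / w' l * (d l / (W0 * B * Lr)) := by
    rw [fPrimeW, if_neg (hr l).ne', hLrdef, hIrdef]
  have hfr_le : fPrimeW V v σ2 W0 B d w' r l ≤ t * fPrimeW V v σ2 W0 B d w' q l := by
    rw [hfqval, hfrval, heqt]
    have h1 : d l / (W0 * B * Lr) ≤ d l / (W0 * B * Lq) :=
      div_le_div_of_nonneg_left (hd l).le (mul_pos (mul_pos hW0 hB) hLqpos)
        (by nlinarith [mul_pos hW0 hB])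
    have h2 : 0 ≤ t * q l / w' l := div_nonneg (mul_nonneg ht0.le (hq l).le) (hw' l).le
    calc t * q l / w' l * (d l / (W0 * B * Lr))
        ≤ t * q l / w' l * (d l / (W0 * B * Lq)) := mul_le_mul_of_nonneg_left h1 h2
      _ = t * (q l / w' l * (d l / (W0 * B * Lq))) := by ring
  have hfr_lt : 1 < t → fPrimeW V v σ2 W0 B d w' r l < t * fPrimeW V v σ2 W0 B d w' q l := by
    intro h1t
    rw [hfqval, hfrval, heqt]
    have h1 : d l / (W0 * B * Lr) < d l / (W0 * B * Lq) :=
      div_lt_div_of_pos_left (hd l) (mul_pos (mul_pos hW0 hB) hLqpos)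
        (by nlinarith [mul_pos hW0 hB, hL_lt h1t])
    have h2 : 0 < t * q l / w' l := div_pos (mul_pos ht0 (hq l)) (hw' l)
    calc t * q l / w' l * (d l / (W0 * B * Lr))
        < t * q l / w' l * (d l / (W0 * B * Lq)) := mul_lt_mul_of_pos_left h1 h2
      _ = t * (q l / w' l * (d l / (W0 * B * Lq))) := by ring
  -- conclude
  have htq : 0 < t * q l := mul_pos ht0 (hq l)
  constructor
  · have h1 : t * q l ≤ ν * (t * fPrimeW V v σ2 W0 B d w' q l) := by
      rw [← heqt, hfr l]
      exact mul_le_mul_of_nonneg_left hfr_le hν.le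
    have h2 : μ * (t * q l) ≤ ν * (t * q l) := by
      calc μ * (t * q l) ≤ μ * (ν * (t * fPrimeW V v σ2 W0 B d w' q l)) :=
            mul_le_mul_of_nonneg_left h1 hμ.le
        _ = ν * (t * (μ * fPrimeW V v σ2 W0 B d w' q l)) := by ring
        _ = ν * (t * q l) := by rw [← hfq l]
    exact le_of_mul_le_mul_right (by linarith [h2]) htq
  · intro h1t
    have h1 : t * q l < ν * (t * fPrimeW V v σ2 W0 B d w' q l) := by
      rw [← heqt, hfr l]
      exact mul_lt_mul_of_pos_left (hfr_lt h1t) hν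
    have h2 : μ * (t * q l) < ν * (t * q l) := by
      calc μ * (t * q l) < μ * (ν * (t * fPrimeW V v σ2 W0 B d w' q l)) :=
            mul_lt_mul_of_pos_left h1 hμ
        _ = ν * (t * (μ * fPrimeW V v σ2 W0 B d w' q l)) := by ring
        _ = ν * (t * q l) := by rw [← hfq l]
    exact lt_of_mul_lt_mul_right (by linarith [h2]) htq.le

lemma gTwo_mono (hK : 1 ≤ K) (aext : Fin (2 * K) → Fin (K + N))
    (pmax : Fin (K + N) → ℝ) (hpmax : ∀ j, 0 < pmax j) (W0 : ℝ) (hW0 : 0 ≤ W0)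
    (w p q : Fin (2 * K) → ℝ) (hw : ∀ i, 0 ≤ w i) (hpq : ∀ l, p l ≤ q l) :
    gTwo aext pmax W0 w p ≤ gTwo aext pmax W0 w q := by
  haveI : Nonempty (Fin (K + N)) := ⟨⟨0, by omega⟩⟩
  unfold gTwo
  apply mul_le_mul_of_nonneg_left _ hW0
  apply ciSup_le
  intro j
  refine le_trans ?_ (le_ciSup (Set.Finite.bddAbove (Set.finite_range _)) j)
  apply div_le_div_of_nonneg_right _ (hpmax j).le
  apply Finset.sum_le_sum
  intro l _
  by_cases h : aext l = j
  · simp only [h, if_true]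
    exact mul_le_mul_of_nonneg_left (hpq l) (hw l)
  · simp [h]

lemma gTwo_strict (hK : 1 ≤ K) (aext : Fin (2 * K) → Fin (K + N))
    (pmax : Fin (K + N) → ℝ) (hpmax : ∀ j, 0 < pmax j) (W0 : ℝ) (hW0 : 0 < W0)
    (w p q : Fin (2 * K) → ℝ) (hw : ∀ i, 0 < w i) (hpq : ∀ l, p l < q l)
    (hgpos : 0 < gTwo aext pmax W0 w p) :
    gTwo aext pmax W0 w p < gTwo aext pmax W0 w q := by
  haveI : Nonempty (Fin (K + N)) := ⟨⟨0, by omega⟩⟩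
  obtain ⟨j₀, hj₀⟩ := exists_eq_ciSup_of_finite
    (f := fun j : Fin (K + N) => (∑ l, if aext l = j then w l * p l else 0) / pmax j)
  have hgp : gTwo aext pmax W0 w p
      = W0 * ((∑ l, if aext l = j₀ then w l * p l else 0) / pmax j₀) := by
    rw [gTwo, ← hj₀]
  have hsumpos : 0 < ∑ l, if aext l = j₀ then w l * p l else 0 := by
    rw [hgp] at hgpos
    have h1 : 0 < (∑ l, if aext l = j₀ then w l * p l else 0) / pmax j₀ := by
      nlinarith
    by_contra h
    push_neg at h
    have := div_nonpos_of_nonpos_of_nonneg h (hpmax j₀).le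
    linarith
  have hex : ∃ l₀ : Fin (2 * K), aext l₀ = j₀ := by
    by_contra h
    push_neg at h
    have : (∑ l, if aext l = j₀ then w l * p l else 0) = 0 :=
      Finset.sum_eq_zero fun l _ => by simp [h l]
    linarith
  obtain ⟨l₀, hl₀⟩ := hex
  have hsumlt : (∑ l, if aext l = j₀ then w l * p l else 0)
      < ∑ l, if aext l = j₀ then w l * q l else 0 := by
    apply Finset.sum_lt_sum
    · intro l _
      by_cases h : aext l = j₀
      · simp only [h, if_true]
        exact (mul_le_mul_of_nonneg_left (hpq l).le (hw l).le)
      · simp [h]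
    · exact ⟨l₀, Finset.mem_univ l₀, by
        simp only [hl₀, if_true]
        exact mul_lt_mul_of_pos_left (hpq l₀) (hw l₀)⟩
  calc gTwo aext pmax W0 w p
      = W0 * ((∑ l, if aext l = j₀ then w l * p l else 0) / pmax j₀) := hgp
    _ < W0 * ((∑ l, if aext l = j₀ then w l * q l else 0) / pmax j₀) := by
        apply mul_lt_mul_of_pos_left _ hW0
        exact div_lt_div_of_pos_right hsumlt (hpmax j₀)
    _ ≤ gTwo aext pmax W0 w q := by
        apply mul_le_mul_of_nonneg_left _ hW0.le
        exact le_ciSup (f := fun j : Fin (K + N) =>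
          (∑ l, if aext l = j then w l * q l else 0) / pmax j)
          (Set.Finite.bddAbove (Set.finite_range _)) j₀

lemma gTwo_smul (hK : 1 ≤ K) (aext : Fin (2 * K) → Fin (K + N))
    (pmax : Fin (K + N) → ℝ) (W0 : ℝ) (w p : Fin (2 * K) → ℝ)
    (c : ℝ) (hc : 0 ≤ c) :
    gTwo aext pmax W0 w (fun l => c * p l) = c * gTwo aext pmax W0 w p := by
  haveI : Nonempty (Fin (K + N)) := ⟨⟨0, by omega⟩⟩
  unfold gTwo
  have h : ∀ j : Fin (K + N),
      (∑ l, if aext l = j then w l * (c * p l) else 0) / pmax j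
      = c * ((∑ l, if aext l = j then w l * p l else 0) / pmax j) := by
    intro j
    rw [mul_div_assoc', Finset.mul_sum]
    congr 1
    apply Finset.sum_congr rfl
    intro l _
    by_cases hl : aext l = j <;> simp [hl] <;> ring
  simp_rw [h]
  rw [← Real.mul_iSup_of_nonneg hc]
  ring

lemma interf_eq_interfW (V : Matrix (Fin (2 * K)) (Fin (2 * K)) ℝ)
    (v : Fin (2 * K) → ℝ) (σ2 : ℝ) (p w : Fin (2 * K) → ℝ) (l : Fin (2 * K)) :
    interf V v σ2 p w l = interfW V v σ2 w p l := by
  unfold interf interfW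
  congr 1
  exact congrArg₂ _ (Finset.sum_congr rfl fun j _ => by ring) rfl

end PowerAux

/-- Proposition 3 of the paper: let `w'` be the normalized fixed point
of `f_{p'}` (with utility `λ'`) and `p''` the normalized fixed point of `f'_{w'}`
(with utility `λ''` and `g_{2,w'}(p'') = 1`). Then (i) if `g_{2,p'}(w') = 1` we have
`λ'' = λ'` and `p'' = p'`; (ii) if `g_{2,p'}(w') < 1` we have `λ'' > λ'`. -/
theorem power_update_utility (K N : ℕ) (hK : 1 ≤ K) (hN : 1 ≤ N)
    (V : Matrix (Fin (2 * K)) (Fin (2 * K)) ℝ) (hV : ∀ i j, 0 ≤ V i j)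
    (v : Fin (2 * K) → ℝ) (hv : ∀ i, 0 < v i)
    (σ2 : ℝ) (hσ2 : 0 < σ2) (W0 B : ℝ) (hW0 : 0 < W0) (hB : 0 < B)
    (d : Fin (2 * K) → ℝ) (hd : ∀ i, 0 < d i)
    (asg : Fin (2 * K) → Fin N) (aext : Fin (2 * K) → Fin (K + N))
    (pmax : Fin (K + N) → ℝ) (hpmax : ∀ j, 0 < pmax j)
    (p' : Fin (2 * K) → ℝ) (hp' : ∀ i, 0 < p' i)
    (w' : Fin (2 * K) → ℝ) (hw' : ∀ i, 0 < w' i) (lam' : ℝ)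
    (hlam' : lam' = 1 / max (gOne asg (fun l => rateF V v σ2 W0 B d p' w' l))
      (gTwo aext pmax W0 (fun l => rateF V v σ2 W0 B d p' w' l) p'))
    (hfixw : ∀ l, w' l = lam' * rateF V v σ2 W0 B d p' w' l)
    (hgw : max (gOne asg w') (gTwo aext pmax W0 w' p') = 1)
    (p'' : Fin (2 * K) → ℝ) (hp'' : ∀ i, 0 < p'' i) (lam'' : ℝ)
    (hlam'' : lam'' = 1 / gTwo aext pmax W0 w'
      (fun l => fPrimeW V v σ2 W0 B d w' p'' l))
    (hfixp : ∀ l, p'' l = lam'' * fPrimeW V v σ2 W0 B d w' p'' l)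
    (hgp : gTwo aext pmax W0 w' p'' = 1) :
    (gTwo aext pmax W0 w' p' = 1 → lam'' = lam' ∧ p'' = p') ∧
    (gTwo aext pmax W0 w' p' < 1 → lam' < lam'') := by
  have i₀ : Fin (2 * K) := ⟨0, by omega⟩
  -- positivity of rateF
  have hrate : ∀ l, 0 < rateF V v σ2 W0 B d p' w' l := by
    intro l
    have hI : 0 < interf V v σ2 p' w' l := by
      rw [PowerAux.interf_eq_interfW]
      exact PowerAux.interfW_pos V hV v hv σ2 hσ2 w' p' (fun i => (hw' i).le)
        (fun i => (hp' i).le) l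
    have hlog : 0 < Real.logb 2 (1 + p' l / interf V v σ2 p' w' l) := by
      apply Real.logb_pos one_lt_two
      have := div_pos (hp' l) hI
      linarith
    rw [rateF]
    exact div_pos (hd l) (mul_pos (mul_pos hW0 hB) hlog)
  have hlam'pos : 0 < lam' := by
    have h := hfixw i₀
    nlinarith [hw' i₀, hrate i₀]
  -- p' is a fixed point of fPrimeW with factor lam'
  have hfix' : ∀ l, p' l = lam' * fPrimeW V v σ2 W0 B d w' p' l := by
    intro l
    rw [fPrimeW, if_neg (hp' l).ne', ← PowerAux.interf_eq_interfW]
    have hr : rateF V v σ2 W0 B d p' w' l = w' l / lam' := by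
      rw [eq_div_iff hlam'pos.ne']
      linarith [hfixw l]
    rw [show d l / (W0 * B * Real.logb 2 (1 + p' l / interf V v σ2 p' w' l))
        = rateF V v σ2 W0 B d p' w' l from rfl, hr]
    have h1 : w' l ≠ 0 := (hw' l).ne'
    have h2 : lam' ≠ 0 := hlam'pos.ne'
    field_simp
  -- maximizers of the ratios
  obtain ⟨l₀, _, hmax₀⟩ := Finset.exists_max_image Finset.univ
    (fun l => p'' l / p' l) ⟨i₀, Finset.mem_univ i₀⟩
  set t := p'' l₀ / p' l₀ with htdef
  have ht0 : 0 < t := div_pos (hp'' l₀) (hp' l₀)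
  have hle_t : ∀ j, p'' j ≤ t * p' j := fun j =>
    (div_le_iff₀ (hp' j)).mp (hmax₀ j (Finset.mem_univ j))
  have heq_t : p'' l₀ = t * p' l₀ := by
    rw [htdef, div_mul_cancel₀ _ (hp' l₀).ne']
  obtain ⟨l₁, _, hmax₁⟩ := Finset.exists_max_image Finset.univ
    (fun l => p' l / p'' l) ⟨i₀, Finset.mem_univ i₀⟩
  set s := p' l₁ / p'' l₁ with hsdef
  have hs0 : 0 < s := div_pos (hp' l₁) (hp'' l₁)
  have hle_s : ∀ j, p' j ≤ s * p'' j := fun j =>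
    (div_le_iff₀ (hp'' j)).mp (hmax₁ j (Finset.mem_univ j))
  have heq_s : p' l₁ = s * p'' l₁ := by
    rw [hsdef, div_mul_cancel₀ _ (hp'' l₁).ne']
  constructor
  · -- case g₂(w', p') = 1
    intro hg1
    have hT : t ≤ 1 := by
      by_contra hT
      push_neg at hT
      have hlt := (PowerAux.key V hV v hv σ2 hσ2 W0 B hW0 hB d hd w' hw'
        p' p'' hp' hp'' lam' lam'' t hfix' hfixp hT.le l₀ hle_t heq_t).2 hT
      rcases lt_or_ge s 1 with hs | hs
      · have hstrict : ∀ l, p' l < p'' l := by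
          intro l
          calc p' l ≤ s * p'' l := hle_s l
            _ < 1 * p'' l := mul_lt_mul_of_pos_right hs (hp'' l)
            _ = p'' l := one_mul _
        have := PowerAux.gTwo_strict hK aext pmax hpmax W0 hW0 w' p' p'' hw' hstrict
          (by rw [hg1]; norm_num)
        rw [hg1, hgp] at this
        exact lt_irrefl 1 this
      · have hge := (PowerAux.key V hV v hv σ2 hσ2 W0 B hW0 hB d hd w' hw'
          p'' p' hp'' hp' lam'' lam' s hfixp hfix' hs l₁ hle_s heq_s).1
        linarith
    have hS : s ≤ 1 := by
      by_contra hS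
      push_neg at hS
      have hlt := (PowerAux.key V hV v hv σ2 hσ2 W0 B hW0 hB d hd w' hw'
        p'' p' hp'' hp' lam'' lam' s hfixp hfix' hS.le l₁ hle_s heq_s).2 hS
      rcases lt_or_ge t 1 with htl | htl
      · have hstrict : ∀ l, p'' l < p' l := by
          intro l
          calc p'' l ≤ t * p' l := hle_t l
            _ < 1 * p' l := mul_lt_mul_of_pos_right htl (hp' l)
            _ = p' l := one_mul _
        have := PowerAux.gTwo_strict hK aext pmax hpmax W0 hW0 w' p'' p' hw' hstrict
          (by rw [hgp]; norm_num)
        rw [hg1, hgp] at this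
        exact lt_irrefl 1 this
      · have hge := (PowerAux.key V hV v hv σ2 hσ2 W0 B hW0 hB d hd w' hw'
          p' p'' hp' hp'' lam' lam'' t hfix' hfixp htl l₀ hle_t heq_t).1
        linarith
    have hpp : p'' = p' := by
      funext l
      have h1 : p'' l ≤ p' l := by
        calc p'' l ≤ t * p' l := hle_t l
          _ ≤ 1 * p' l := mul_le_mul_of_nonneg_right hT (hp' l).le
          _ = p' l := one_mul _
      have h2 : p' l ≤ p'' l := by
        calc p' l ≤ s * p'' l := hle_s l
          _ ≤ 1 * p'' l := mul_le_mul_of_nonneg_right hS (hp'' l).le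
          _ = p'' l := one_mul _
      linarith
    refine ⟨?_, hpp⟩
    have hfp : (fun l => fPrimeW V v σ2 W0 B d w' p'' l)
        = fun l => (1 / lam') * p' l := by
      funext l
      rw [hpp]
      have h := hfix' l
      field_simp
      linarith
    rw [hlam'', hfp, PowerAux.gTwo_smul hK aext pmax W0 w' p'
      (1 / lam') (one_div_nonneg.mpr hlam'pos.le), hg1]
    field_simp
  · -- case g₂(w', p') < 1
    intro hg1
    have hex : ∃ l, p' l < p'' l := by
      by_contra h
      push_neg at h
      have := PowerAux.gTwo_mono hK aext pmax hpmax W0 hW0.le w' p'' p'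
        (fun i => (hw' i).le) h
      rw [hgp] at this
      linarith
    obtain ⟨l, hl⟩ := hex
    have hT : 1 < t := by
      have h1 : 1 < p'' l / p' l := (one_lt_div (hp' l)).mpr hl
      exact lt_of_lt_of_le h1 (hmax₀ l (Finset.mem_univ l))
    exact (PowerAux.key V hV v hv σ2 hσ2 W0 B hW0 hB d hd w' hw'
      p' p'' hp' hp'' lam' lam'' t hfix' hfixp hT.le l₀ hle_t heq_t).2 hT
end

section
/- Let f : ℝ₊ᵏ → ℝ₊₊ᵏ be a standard interference function and suppose there exists p̂ ∈ ℝ₊₊ᵏ with f(p̂) ≤ p̂ componentwise. Then: (i) from any initial point p⁽¹⁾ ∈ ℝ₊ᵏ, the iteration p⁽ᵗ⁺¹⁾ = f(p⁽ᵗ⁾) converges to the unique fixed point p** of f; (ii) p** ≤ p componentwise for every p ∈ ℝ₊ᵏ with p ≥ f(p); and hence (iii) for every componentwise nondecreasing function ψ : ℝ₊ᵏ → ℝ₊ (x ≤ y componentwise implies ψ(x) ≤ ψ(y)), p** minimizes ψ over the feasible set {p ∈ ℝ₊ᵏ : p ≥ f(p)}. -/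
/-- If `x ≤ α * y` for every `α > 1` and `0 ≤ y`, then `x ≤ y`. -/
lemma sif_le_of_forall_mul (x y : ℝ) (hy : 0 ≤ y)
    (h : ∀ α : ℝ, 1 < α → x ≤ α * y) : x ≤ y := by
  by_contra hc
  push_neg at hc
  rcases eq_or_lt_of_le hy with h0 | h0
  · have := h 2 one_lt_two; nlinarith
  · have h1 : 1 < (x + y) / (2 * y) := by
      rw [lt_div_iff₀ (by linarith)]; nlinarith
    have h2 := h _ h1
    have key : (x + y) / (2 * y) * y = (x + y) / 2 := by
      field_simp
    rw [key] at h2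
    linarith

/-- Proposition 4 / Yates' power-minimization result: if a standard
interference function `f` admits a feasible point (`f p̂ ≤ p̂` for some positive `p̂`),
then the iteration `p⁽ᵗ⁺¹⁾ = f(p⁽ᵗ⁾)` converges from every nonnegative initial point
to the unique fixed point `p**`, which is componentwise minimal in the feasible set
`{p ≥ 0 : f p ≤ p}` and hence minimizes every componentwise nondecreasing `ψ` over
that set. -/
theorem sif_power_minimization (k : ℕ) (f : (Fin k → ℝ) → (Fin k → ℝ))
    (hpos : ∀ x : Fin k → ℝ, (∀ i, 0 ≤ x i) → ∀ i, 0 < f x i)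
    (hmono : ∀ x y : Fin k → ℝ, (∀ i, 0 ≤ x i) → x ≤ y → f x ≤ f y)
    (hscale : ∀ α : ℝ, 1 < α → ∀ x : Fin k → ℝ, (∀ i, 0 ≤ x i) →
      ∀ i, f (α • x) i < α * f x i)
    (phat : Fin k → ℝ) (hphat : ∀ i, 0 < phat i) (hfeas : f phat ≤ phat) :
    ∃ pstar : Fin k → ℝ, (∀ i, 0 < pstar i) ∧ pstar = f pstar ∧
      (∀ q : Fin k → ℝ, (∀ i, 0 < q i) → q = f q → q = pstar) ∧
      (∀ p1 : Fin k → ℝ, (∀ i, 0 ≤ p1 i) →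
        Filter.Tendsto (fun t => f^[t] p1) Filter.atTop (nhds pstar)) ∧
      (∀ p : Fin k → ℝ, (∀ i, 0 ≤ p i) → f p ≤ p → pstar ≤ p) ∧
      (∀ ψ : (Fin k → ℝ) → ℝ,
        (∀ x y : Fin k → ℝ, (∀ i, 0 ≤ x i) → x ≤ y → ψ x ≤ ψ y) →
        ∀ p : Fin k → ℝ, (∀ i, 0 ≤ p i) → f p ≤ p → ψ pstar ≤ ψ p) := by
  classical
  set a : ℕ → Fin k → ℝ := fun t => f^[t] 0 with ha
  have a_succ : ∀ t, a (t + 1) = f (a t) := fun t => Function.iterate_succ_apply' f t 0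
  have a_zero : a 0 = 0 := rfl
  have a_nonneg : ∀ t, ∀ i, 0 ≤ a t i := by
    intro t
    induction t with
    | zero => intro i; simp [a_zero]
    | succ t ih => rw [a_succ]; exact fun i => (hpos _ ih i).le
  have a_le_phat : ∀ t, a t ≤ phat := by
    intro t
    induction t with
    | zero => intro i; exact (hphat i).le
    | succ t ih => rw [a_succ]; exact le_trans (hmono _ _ (a_nonneg t) ih) hfeas
  have a_step : ∀ t, a t ≤ a (t + 1) := by
    intro t
    induction t with
    | zero => rw [a_succ, a_zero]; exact fun i => (hpos 0 (fun _ => le_rfl) i).le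
    | succ t ih => rw [a_succ, a_succ]; exact hmono _ _ (a_nonneg t) ih
  have a_mono : Monotone a := monotone_nat_of_le_succ a_step
  set pstar : Fin k → ℝ := fun i => ⨆ t, a t i with hpstar
  have bdd : ∀ i, BddAbove (Set.range fun t => a t i) := by
    intro i
    exact ⟨phat i, by rintro x ⟨t, rfl⟩; exact a_le_phat t i⟩
  have a_tendsto : ∀ i, Filter.Tendsto (fun t => a t i) Filter.atTop (nhds (pstar i)) :=
    fun i => tendsto_atTop_ciSup (fun s t hst => a_mono hst i) (bdd i)
  have a_le_pstar : ∀ t, a t ≤ pstar := fun t i => le_ciSup (bdd i) t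
  have pstar_pos : ∀ i, 0 < pstar i := by
    intro i
    have h1 : a 1 i ≤ pstar i := a_le_pstar 1 i
    have : a 1 = f 0 := by rw [show (1 : ℕ) = 0 + 1 from rfl, a_succ, a_zero]
    rw [this] at h1
    exact lt_of_lt_of_le (hpos 0 (fun _ => le_rfl) i) h1
  have pstar_nonneg : ∀ i, 0 ≤ pstar i := fun i => (pstar_pos i).le
  -- pstar ≤ f pstar
  have hfix1 : pstar ≤ f pstar := by
    intro i
    apply ciSup_le
    intro t
    cases t with
    | zero => rw [a_zero]; exact (hpos pstar pstar_nonneg i).le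
    | succ t => rw [a_succ]; exact hmono _ _ (a_nonneg t) (a_le_pstar t) i
  -- f pstar ≤ pstar
  have hfix2 : f pstar ≤ pstar := by
    intro i
    apply sif_le_of_forall_mul _ _ (pstar_nonneg i)
    intro α hα
    have hαpos : (0 : ℝ) < α := lt_trans one_pos hα
    have hev : ∀ j, ∀ᶠ t in Filter.atTop, pstar j ≤ α * a t j := by
      intro j
      have hlt : pstar j / α < pstar j := div_lt_self (pstar_pos j) hα
      have := (a_tendsto j).eventually (eventually_gt_nhds hlt)
      filter_upwards [this] with t ht
      rw [div_lt_iff₀ hαpos] at ht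
      linarith [ht]
    obtain ⟨t, ht⟩ := (Filter.eventually_all.2 hev).exists
    have hle : pstar ≤ α • a t := fun j => by
      simpa [Pi.smul_apply, smul_eq_mul] using ht j
    refine le_of_lt ?_
    calc f pstar i ≤ f (α • a t) i := hmono pstar _ pstar_nonneg hle i
      _ < α * f (a t) i := hscale α hα (a t) (a_nonneg t) i
      _ = α * a (t + 1) i := by rw [a_succ]
      _ ≤ α * pstar i := by
          have := a_le_pstar (t + 1) i
          nlinarith
  have pstar_fixed : pstar = f pstar := le_antisymm hfix1 hfix2
  -- minimality
  have hmin : ∀ p : Fin k → ℝ, (∀ i, 0 ≤ p i) → f p ≤ p → pstar ≤ p := by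
    intro p hp hfp
    have hat : ∀ t, a t ≤ p := by
      intro t
      induction t with
      | zero => rw [a_zero]; exact fun i => hp i
      | succ t ih => rw [a_succ]; exact le_trans (hmono _ _ (a_nonneg t) ih) hfp
    exact fun i => ciSup_le fun t => hat t i
  -- uniqueness
  have huniq : ∀ q : Fin k → ℝ, (∀ i, 0 < q i) → q = f q → q = pstar := by
    intro q hq hfq
    have hpq : pstar ≤ q := hmin q (fun i => (hq i).le) (le_of_eq hfq.symm)
    rcases Nat.eq_zero_or_pos k with hk | hk
    · subst hk; funext i; exact i.elim0
    have hne : Nonempty (Fin k) := ⟨⟨0, hk⟩⟩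
    obtain ⟨i0, _, hi0⟩ := Finset.exists_mem_eq_sup' (Finset.univ_nonempty (α := Fin k))
      (fun i => q i / pstar i)
    set α := Finset.univ.sup' (Finset.univ_nonempty (α := Fin k)) (fun i => q i / pstar i)
      with hαdef
    have hle : ∀ i, q i ≤ α * pstar i := by
      intro i
      have h1 : q i / pstar i ≤ α := by
        rw [hαdef]; exact Finset.le_sup' (fun j => q j / pstar j) (Finset.mem_univ i)
      rw [div_le_iff₀ (pstar_pos i)] at h1
      linarith [h1]
    by_cases hα : 1 < α
    · exfalso
      have hqs : q ≤ α • pstar := fun i => by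
        simpa [Pi.smul_apply, smul_eq_mul] using hle i
      have hstrict : q i0 < α * pstar i0 := by
        calc q i0 = f q i0 := congrFun hfq i0
          _ ≤ f (α • pstar) i0 := hmono q _ (fun i => (hq i).le) hqs i0
          _ < α * f pstar i0 := hscale α hα pstar pstar_nonneg i0
          _ = α * pstar i0 := by rw [← pstar_fixed]
      have heq : q i0 = α * pstar i0 := by
        have hne0 : pstar i0 ≠ 0 := (pstar_pos i0).ne'
        rw [hi0]
        field_simp
      linarith
    · push_neg at hα
      have hqp : q ≤ pstar := by
        intro i
        have := hle i
        nlinarith [pstar_pos i]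
      exact le_antisymm hqp hpq
  -- convergence of the upper sequence from α • pstar
  have hupper : ∀ α : ℝ, 1 < α → ∀ i,
      Filter.Tendsto (fun t => f^[t] (α • pstar) i) Filter.atTop (nhds (pstar i)) := by
    intro α hα
    have hαpos : (0 : ℝ) < α := lt_trans one_pos hα
    set b : ℕ → Fin k → ℝ := fun t => f^[t] (α • pstar) with hb
    have b_succ : ∀ t, b (t + 1) = f (b t) := fun t =>
      Function.iterate_succ_apply' f t (α • pstar)
    have b_zero : b 0 = α • pstar := rfl
    have b0_nonneg : ∀ i, 0 ≤ (α • pstar) i := fun i => by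
      simp only [Pi.smul_apply, smul_eq_mul]
      exact mul_nonneg hαpos.le (pstar_nonneg i)
    have b_nonneg : ∀ t, ∀ i, 0 ≤ b t i := by
      intro t
      induction t with
      | zero => exact b0_nonneg
      | succ t ih => rw [b_succ]; exact fun i => (hpos _ ih i).le
    have b_ge : ∀ t, pstar ≤ b t := by
      intro t
      induction t with
      | zero =>
        intro i
        have := pstar_pos i
        simp only [b_zero, Pi.smul_apply, smul_eq_mul]
        nlinarith
      | succ t ih =>
        rw [b_succ]
        calc pstar = f pstar := pstar_fixed
          _ ≤ f (b t) := hmono _ _ pstar_nonneg ih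
    have b_step : ∀ t, b (t + 1) ≤ b t := by
      intro t
      induction t with
      | zero =>
        rw [b_succ, b_zero]
        intro i
        have := hscale α hα pstar pstar_nonneg i
        have h2 : f pstar i = pstar i := (congrFun pstar_fixed i).symm
        simp only [Pi.smul_apply, smul_eq_mul]
        rw [h2] at this
        exact this.le
      | succ t ih =>
        have h := hmono (b (t + 1)) (b t) (b_nonneg (t + 1)) ih
        rw [b_succ (t + 1), b_succ t]
        rw [b_succ t] at h
        exact h
    have b_anti : Antitone b := antitone_nat_of_succ_le b_step
    set q : Fin k → ℝ := fun i => ⨅ t, b t i with hq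
    have bddb : ∀ i, BddBelow (Set.range fun t => b t i) := by
      intro i
      exact ⟨pstar i, by rintro x ⟨t, rfl⟩; exact b_ge t i⟩
    have b_tendsto : ∀ i, Filter.Tendsto (fun t => b t i) Filter.atTop (nhds (q i)) :=
      fun i => tendsto_atTop_ciInf (fun s t hst => b_anti hst i) (bddb i)
    have q_le_b : ∀ t, q ≤ b t := fun t i => ciInf_le (bddb i) t
    have q_ge : pstar ≤ q := fun i => le_ciInf fun t => b_ge t i
    have q_pos : ∀ i, 0 < q i := fun i => lt_of_lt_of_le (pstar_pos i) (q_ge i)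
    have q_nonneg : ∀ i, 0 ≤ q i := fun i => (q_pos i).le
    have hqfix1 : f q ≤ q := by
      intro i
      apply le_ciInf
      intro t
      calc f q i ≤ f (b t) i := hmono _ _ q_nonneg (q_le_b t) i
        _ = b (t + 1) i := (congrFun (b_succ t) i).symm
        _ ≤ b t i := b_step t i
    have hqfix2 : q ≤ f q := by
      intro i
      apply sif_le_of_forall_mul _ _ (hpos q q_nonneg i).le
      intro β hβ
      have hβpos : (0 : ℝ) < β := lt_trans one_pos hβ
      have hev : ∀ j, ∀ᶠ t in Filter.atTop, b t j ≤ β * q j := by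
        intro j
        have hlt : q j < β * q j := by nlinarith [q_pos j]
        have := (b_tendsto j).eventually (eventually_lt_nhds hlt)
        filter_upwards [this] with t ht
        exact ht.le
      obtain ⟨t, ht⟩ := (Filter.eventually_all.2 hev).exists
      have hle : b t ≤ β • q := fun j => by
        simpa [Pi.smul_apply, smul_eq_mul] using ht j
      refine le_of_lt ?_
      calc q i ≤ b (t + 1) i := q_le_b (t + 1) i
        _ = f (b t) i := congrFun (b_succ t) i
        _ ≤ f (β • q) i := hmono _ _ (b_nonneg t) hle i
        _ < β * f q i := hscale β hβ q q_nonneg i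
    have hqeq : q = pstar := huniq q q_pos (le_antisymm hqfix2 hqfix1)
    intro i
    have hbt := b_tendsto i
    rw [hqeq] at hbt
    exact hbt
  -- convergence from any nonnegative initial point
  have hconv : ∀ p1 : Fin k → ℝ, (∀ i, 0 ≤ p1 i) →
      Filter.Tendsto (fun t => f^[t] p1) Filter.atTop (nhds pstar) := by
    intro p1 hp1
    rw [tendsto_pi_nhds]
    intro i
    set α : ℝ := 2 + ∑ j, p1 j / pstar j with hαdef
    have hsum_nonneg : (0 : ℝ) ≤ ∑ j, p1 j / pstar j :=
      Finset.sum_nonneg fun j _ => div_nonneg (hp1 j) (pstar_nonneg j)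
    have hα : (1 : ℝ) < α := by rw [hαdef]; linarith
    have hp1le : p1 ≤ α • pstar := by
      intro j
      have h1 : p1 j / pstar j ≤ ∑ j', p1 j' / pstar j' :=
        Finset.single_le_sum (fun j' _ => div_nonneg (hp1 j') (pstar_nonneg j'))
          (Finset.mem_univ j)
      have h2 : p1 j / pstar j ≤ α := by rw [hαdef]; linarith
      rw [div_le_iff₀ (pstar_pos j)] at h2
      simpa [Pi.smul_apply, smul_eq_mul] using h2
    have hnn : ∀ t, ∀ i, 0 ≤ f^[t] p1 i := by
      intro t
      induction t with
      | zero => exact hp1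
      | succ t ih =>
        rw [Function.iterate_succ_apply' f t p1]
        exact fun i => (hpos _ ih i).le
    have hlow : ∀ t, a t ≤ f^[t] p1 := by
      intro t
      induction t with
      | zero => rw [a_zero]; exact fun i => hp1 i
      | succ t ih =>
        rw [a_succ, Function.iterate_succ_apply' f t p1]
        exact hmono _ _ (a_nonneg t) ih
    have hhigh : ∀ t, f^[t] p1 ≤ f^[t] (α • pstar) := by
      intro t
      induction t with
      | zero => exact hp1le
      | succ t ih =>
        rw [Function.iterate_succ_apply' f t p1,
          Function.iterate_succ_apply' f t (α • pstar)]
        exact hmono _ _ (hnn t) ih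
    exact tendsto_of_tendsto_of_tendsto_of_le_of_le (a_tendsto i) (hupper α hα i)
      (fun t => hlow t i) (fun t => hhigh t i)
  exact ⟨pstar, pstar_pos, pstar_fixed, huniq, hconv, hmin,
    fun ψ hψ p hp hfp => hψ pstar p pstar_nonneg (hmin p hp hfp)⟩
end
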